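/- arXiv:2404.07592 — 7 statements merged into one kernel-verified Lean document; each statement's English description precedes it below -/
import Mathlib

section
/- There are no positive, non-constant superharmonic functions on ℝ² (i.e., if u ∈ C²(ℝ²) satisfies u > 0 and Δu ≤ 0 everywhere, then u is constant). -/
open MeasureTheory Real
open scoped ENNReal

noncomputable def lap {N : ℕ} (f : EuclideanSpace ℝ (Fin N) → ℝ) (x : EuclideanSpace ℝ (Fin N)) : ℝ :=
  ∑ i, iteratedFDeriv ℝ 2 f x ![EuclideanSpace.single i 1, EuclideanSpace.single i 1]

noncomputable def Kab {N : ℕ} (α β : ℝ) (x : EuclideanSpace ℝ (Fin N)) : ℝ :=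
  ‖x‖ ^ (-α) * (Real.log (1 + ‖x‖)) ^ β

noncomputable def convK {N : ℕ} (α β : ℝ) (f : EuclideanSpace ℝ (Fin N) → ℝ)
    (x : EuclideanSpace ℝ (Fin N)) : ℝ :=
  ∫ y, Kab α β (x - y) * f y

noncomputable def convKL {N : ℕ} (α β : ℝ) (f : EuclideanSpace ℝ (Fin N) → ℝ)
    (x : EuclideanSpace ℝ (Fin N)) : ℝ≥0∞ :=
  ∫⁻ y, ENNReal.ofReal (Kab α β (x - y) * f y)

local notation "EE" => EuclideanSpace ℝ (Fin 2)

noncomputable def ev (i : Fin 2) : EE := EuclideanSpace.single i 1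

noncomputable def Qf (z : EE) : ℝ := ∑ j, (z j)^2

lemma Qf_eq (z : EE) : Qf z = ‖z‖^2 := by
  rw [EuclideanSpace.norm_eq, Real.sq_sqrt (by positivity)]
  simp [Qf]

lemma Qf_nonneg (z : EE) : 0 ≤ Qf z := by rw [Qf_eq]; positivity

lemma Qf_line (z : EE) (i : Fin 2) (t : ℝ) :
    Qf (z + t • ev i) = Qf z + 2 * z i * t + t^2 := by
  fin_cases i <;>
    simp [Qf, Fin.sum_univ_two, ev, EuclideanSpace.single_apply, PiLp.add_apply,
      PiLp.smul_apply, smul_eq_mul] <;> ring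

lemma Qf_continuous : Continuous Qf := by
  have : Qf = fun z => ‖z‖^2 := funext Qf_eq
  rw [this]; exact (continuous_norm).pow 2


lemma sd_test {g G : ℝ → ℝ} {c : ℝ}
    (hg : ∀ᶠ t in nhds (0:ℝ), HasDerivAt g (G t) t)
    (hG : HasDerivAt G c 0) (hmin : IsLocalMin g 0) : 0 ≤ c := by
  by_contra hc
  push_neg at hc
  have hG0 : G 0 = 0 := by
    have h1 := hmin.deriv_eq_zero
    rwa [hg.self_of_nhds.deriv] at h1
  -- slope of G at 0 tends to c < 0
  have hslope := hasDerivAt_iff_tendsto_slope.mp hG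
  have hneg : ∀ᶠ t in nhdsWithin (0:ℝ) (Set.Ioi 0), G t < 0 := by
    have h2 : ∀ᶠ t in nhdsWithin (0:ℝ) {(0:ℝ)}ᶜ, slope G 0 t < c/2 := by
      exact hslope.eventually (eventually_lt_nhds (by linarith))
    have h3 : nhdsWithin (0:ℝ) (Set.Ioi 0) ≤ nhdsWithin (0:ℝ) {(0:ℝ)}ᶜ :=
      nhdsWithin_mono _ (fun x hx => ne_of_gt hx)
    filter_upwards [h3 h2, self_mem_nhdsWithin] with t ht ht0
    have : slope G 0 t = G t / t := by simp [slope, hG0, div_eq_inv_mul]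
    rw [this] at ht
    have htp : (0:ℝ) < t := ht0
    nlinarith [div_lt_iff₀ htp |>.mp ht]
  rw [eventually_nhdsWithin_iff] at hneg
  obtain ⟨δ₁, hδ₁, hball₁⟩ := Metric.eventually_nhds_iff.mp hneg
  obtain ⟨δ₂, hδ₂, hball₂⟩ := Metric.eventually_nhds_iff.mp hg
  obtain ⟨δ₃, hδ₃, hball₃⟩ := Metric.eventually_nhds_iff.mp hmin
  set δ := min δ₁ (min δ₂ δ₃) / 2 with hδdef
  have hδpos : 0 < δ := by positivity
  have hδ1 : δ < δ₁ := by
    have := min_le_left δ₁ (min δ₂ δ₃); simp only [hδdef]; linarith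
  have hδ2 : δ < δ₂ := by
    have h := min_le_right δ₁ (min δ₂ δ₃); have := min_le_left δ₂ δ₃
    simp only [hδdef]; linarith
  have hδ3 : δ < δ₃ := by
    have h := min_le_right δ₁ (min δ₂ δ₃); have := min_le_right δ₂ δ₃
    simp only [hδdef]; linarith
  have hanti : StrictAntiOn g (Set.Icc 0 δ) := by
    apply strictAntiOn_of_deriv_neg (convex_Icc 0 δ)
    · intro t ht
      have : dist t (0:ℝ) < δ₂ := by
        rw [Real.dist_eq, sub_zero, abs_of_nonneg ht.1]; linarith [ht.2]
      exact (hball₂ this).continuousAt.continuousWithinAt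
    · intro t ht
      rw [interior_Icc] at ht
      have hd2 : dist t (0:ℝ) < δ₂ := by
        rw [Real.dist_eq, sub_zero, abs_of_nonneg (le_of_lt ht.1)]; linarith [ht.2]
      have hd1 : dist t (0:ℝ) < δ₁ := by
        rw [Real.dist_eq, sub_zero, abs_of_nonneg (le_of_lt ht.1)]; linarith [ht.2]
      rw [(hball₂ hd2).deriv]
      exact hball₁ hd1 ht.1
  have hlt : g δ < g 0 :=
    hanti (Set.left_mem_Icc.mpr hδpos.le) (Set.right_mem_Icc.mpr hδpos.le) hδpos
  have : g 0 ≤ g δ := hball₃ (by rw [Real.dist_eq, sub_zero, abs_of_nonneg hδpos.le]; linarith)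
  linarith


lemma line_hasDerivAt (x w : EE) (t : ℝ) :
    HasDerivAt (fun s : ℝ => x + s • w) w t := by
  simpa using ((hasDerivAt_id t).smul_const w).const_add x

lemma comp_line_hasDerivAt {f : EE → ℝ} (x w : EE) (t : ℝ)
    (hf : DifferentiableAt ℝ f (x + t • w)) :
    HasDerivAt (fun s : ℝ => f (x + s • w)) (fderiv ℝ f (x + t • w) w) t :=
  hf.hasFDerivAt.comp_hasDerivAt t (line_hasDerivAt x w t)

lemma u_second {u : EE → ℝ} (hu : ContDiff ℝ 2 u) (x w : EE) :
    HasDerivAt (fun t : ℝ => fderiv ℝ u (x + t • w) w)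
      (iteratedFDeriv ℝ 2 u x ![w, w]) 0 := by
  have hdF : DifferentiableAt ℝ (fderiv ℝ u) x :=
    ((hu.fderiv_right (m := 1) (by norm_num)).differentiable (by norm_num)) x
  have h1 : HasDerivAt (fun t : ℝ => fderiv ℝ u (x + t • w)) (fderiv ℝ (fderiv ℝ u) x w) 0 := by
    have h0 : HasFDerivAt (fderiv ℝ u) (fderiv ℝ (fderiv ℝ u) x) (x + (0:ℝ) • w) := by
      simpa using hdF.hasFDerivAt
    exact h0.comp_hasDerivAt 0 (line_hasDerivAt x w 0)
  have h2 := h1.clm_apply (hasDerivAt_const (0:ℝ) w)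
  simp only [map_zero, add_zero] at h2
  rw [iteratedFDeriv_two_apply]
  simpa using h2
lemma comparison {u : EE → ℝ} (hu : ContDiff ℝ 2 u) (hsuper : ∀ x, lap u x ≤ 0)
    (x₀ : EE) (r₁ r₂ α β : ℝ) (h01 : 0 < r₁) (h12 : r₁ < r₂)
    (hb1 : ∀ z : EE, ‖z - x₀‖ = r₁ → α + β/2 * Real.log (Qf (z - x₀)) ≤ u z)
    (hb2 : ∀ z : EE, ‖z - x₀‖ = r₂ → α + β/2 * Real.log (Qf (z - x₀)) ≤ u z)
    (y : EE) (hy1 : r₁ ≤ ‖y - x₀‖) (hy2 : ‖y - x₀‖ ≤ r₂) :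
    α + β/2 * Real.log (Qf (y - x₀)) ≤ u y := by
  apply le_of_forall_pos_le_add
  intro ε hε
  have hr₂ : (0:ℝ) < r₂ := h01.trans h12
  set εt : ℝ := ε / r₂^2 with hεt_def
  have hεt : 0 < εt := by positivity
  set v : EE → ℝ := fun z => u z - (α + β/2 * Real.log (Qf (z - x₀))) - εt * Qf (z - x₀)
    with hv_def
  set A : Set EE := Metric.closedBall x₀ r₂ \ Metric.ball x₀ r₁ with hA_def
  have memA : ∀ z : EE, z ∈ A ↔ r₁ ≤ ‖z - x₀‖ ∧ ‖z - x₀‖ ≤ r₂ := by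
    intro z
    simp [hA_def, Metric.mem_closedBall, Metric.mem_ball, dist_eq_norm, not_lt, and_comm]
  have hQA : ∀ z ∈ A, 0 < Qf (z - x₀) := by
    intro z hz
    rw [Qf_eq]
    have := ((memA z).mp hz).1
    nlinarith
  have hAcomp : IsCompact A := (isCompact_closedBall _ _).diff Metric.isOpen_ball
  have hyA : y ∈ A := (memA y).mpr ⟨hy1, hy2⟩
  have hQcont : Continuous fun z : EE => Qf (z - x₀) :=
    Qf_continuous.comp (continuous_id.sub continuous_const)
  have hvc : ContinuousOn v A := by
    apply ContinuousOn.sub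
    apply ContinuousOn.sub
    · exact (hu.continuous).continuousOn
    · apply ContinuousOn.add continuousOn_const
      apply ContinuousOn.mul continuousOn_const
      intro z hz
      exact (hQcont.continuousAt.log (ne_of_gt (hQA z hz))).continuousWithinAt
    · exact (continuous_const.mul hQcont).continuousOn
  obtain ⟨z, hzA, hzmin⟩ := hAcomp.exists_isMinOn ⟨y, hyA⟩ hvc
  obtain ⟨hz1, hz2⟩ := (memA z).mp hzA
  -- key : the min value is ≥ -εt * r₂^2
  have key : -(εt * r₂^2) ≤ v z := by
    rcases eq_or_lt_of_le hz1 with hr | hr1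
    · -- on inner sphere
      have hQz : Qf (z - x₀) = r₁^2 := by rw [Qf_eq, ← hr]
      have hb := hb1 z hr.symm
      rw [hQz] at hb
      have h2 : εt * r₁^2 ≤ εt * r₂^2 := mul_le_mul_of_nonneg_left (by nlinarith) hεt.le
      simp only [hv_def, hQz]
      linarith
    rcases eq_or_lt_of_le hz2 with hr | hr2
    · -- on outer sphere
      have hQz : Qf (z - x₀) = r₂^2 := by rw [Qf_eq, hr]
      have hb := hb2 z hr
      rw [hQz] at hb
      simp only [hv_def, hQz]
      linarith
    -- interior : contradiction
    exfalso
    set zc : EE := z - x₀ with hzc_def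
    set cq : ℝ := Qf zc with hcq_def
    have hc0 : 0 < cq := hQA z hzA
    have hcne : cq ≠ 0 := ne_of_gt hc0
    have hloc : IsLocalMin v z := by
      have hU : IsOpen (Metric.ball x₀ r₂ \ Metric.closedBall x₀ r₁) :=
        Metric.isOpen_ball.sdiff Metric.isClosed_closedBall
      have hzU : z ∈ Metric.ball x₀ r₂ \ Metric.closedBall x₀ r₁ := by
        constructor
        · rw [Metric.mem_ball, dist_eq_norm]; exact hr2
        · rw [Metric.mem_closedBall, dist_eq_norm, not_le]; exact hr1
      have hUA : Metric.ball x₀ r₂ \ Metric.closedBall x₀ r₁ ⊆ A := by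
        intro w hw
        exact ⟨Metric.ball_subset_closedBall hw.1,
          fun hball => hw.2 (Metric.ball_subset_closedBall hball)⟩
      exact Filter.eventually_of_mem (hU.mem_nhds hzU)
        (fun w hw => isMinOn_iff.mp hzmin w (hUA hw))
    have key_i : ∀ i : Fin 2,
        0 ≤ iteratedFDeriv ℝ 2 u z ![ev i, ev i]
          - β/2 * ((2*cq - 4*(zc i)^2)/cq^2) - εt * 2 := by
      intro i
      set p : ℝ := zc i with hp_def
      have hline_sub : ∀ s : ℝ, z + s • ev i - x₀ = zc + s • ev i := by
        intro s; rw [hzc_def]; abel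
      have hrw : (fun s : ℝ => v (z + s • ev i))
          = fun s => u (z + s • ev i) - (α + β/2 * Real.log (cq + 2*p*s + s^2))
              - εt * (cq + 2*p*s + s^2) := by
        funext s
        simp only [hv_def]
        rw [hline_sub s, Qf_line]
      have hPcont : Continuous fun t : ℝ => cq + 2*p*t + t^2 :=
        (continuous_const.add (continuous_const.mul continuous_id)).add (continuous_pow 2)
      have hPpos : ∀ᶠ t in nhds (0:ℝ), 0 < cq + 2*p*t + t^2 := by
        have h1 : Filter.Tendsto (fun t : ℝ => cq + 2*p*t + t^2) (nhds 0) (nhds cq) := by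
          have := hPcont.tendsto 0
          simpa using this
        exact h1.eventually (lt_mem_nhds hc0)
      have hPder : ∀ t : ℝ, HasDerivAt (fun s : ℝ => cq + 2*p*s + s^2) (2*p + 2*t) t := by
        intro t
        have h1 : HasDerivAt (fun s : ℝ => s^2) (2*t) t := by
          simpa using hasDerivAt_pow 2 t
        have h2 : HasDerivAt (fun s : ℝ => 2*p*s) (2*p) t := by
          simpa using (hasDerivAt_id t).const_mul (2*p)
        exact (h2.const_add cq).add h1
      apply sd_test (g := fun t => v (z + t • ev i))
        (G := fun t => fderiv ℝ u (z + t • ev i) (ev i)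
          - β/2 * ((2*p + 2*t)/(cq + 2*p*t + t^2)) - εt * (2*p + 2*t))
      · filter_upwards [hPpos] with t ht
        rw [hrw]
        have hU : HasDerivAt (fun s : ℝ => u (z + s • ev i))
            (fderiv ℝ u (z + t • ev i) (ev i)) t :=
          comp_line_hasDerivAt z (ev i) t
            ((hu.differentiable (by norm_num)).differentiableAt)
        have hL : HasDerivAt (fun s : ℝ => α + β/2 * Real.log (cq + 2*p*s + s^2))
            (β/2 * ((2*p + 2*t)/(cq + 2*p*t + t^2))) t :=
          (((hPder t).log (ne_of_gt ht)).const_mul (β/2)).const_add α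
        have hQd : HasDerivAt (fun s : ℝ => εt * (cq + 2*p*s + s^2)) (εt * (2*p + 2*t)) t :=
          (hPder t).const_mul εt
        exact (hU.sub hL).sub hQd
      · have hG1 := u_second hu z (ev i)
        have hG2 : HasDerivAt (fun t : ℝ => (2*p + 2*t)/(cq + 2*p*t + t^2))
            ((2*cq - 4*p^2)/cq^2) 0 := by
          have hnum : HasDerivAt (fun t : ℝ => 2*p + 2*t) 2 0 := by
            simpa using ((hasDerivAt_id (0:ℝ)).const_mul 2).const_add (2*p)
          have hd : HasDerivAt (fun t : ℝ => (2*p + 2*t)/(cq + 2*p*t + t^2))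
              ((2 * (cq + 2 * p * 0 + 0 ^ 2) - (2 * p + 2 * 0) * (2 * p + 2 * 0)) / (cq + 2 * p * 0 + 0 ^ 2) ^ 2) 0 :=
            hnum.div (hPder 0) (by simpa using hcne)
          convert hd using 1
          simp only [mul_zero, add_zero, ne_eq, OfNat.ofNat_ne_zero, not_false_eq_true, zero_pow]
          ring
        have hG3 : HasDerivAt (fun t : ℝ => εt * (2*p + 2*t)) (εt * 2) 0 := by
          have hnum : HasDerivAt (fun t : ℝ => 2*p + 2*t) 2 0 := by
            simpa using ((hasDerivAt_id (0:ℝ)).const_mul 2).const_add (2*p)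
          exact hnum.const_mul εt
        exact (hG1.sub (hG2.const_mul (β/2))).sub hG3
      · have hcont : Continuous fun t : ℝ => z + t • ev i :=
          continuous_const.add (continuous_id.smul continuous_const)
        have h0 : IsLocalMin v ((fun t : ℝ => z + t • ev i) 0) := by simpa using hloc
        have := IsLocalMin.comp_continuous (g := fun t : ℝ => z + t • ev i) (b := (0:ℝ)) h0 hcont.continuousAt
        exact this
    have k0 := key_i 0
    have k1 := key_i 1
    have hsumsq : (zc 0)^2 + (zc 1)^2 = cq := by
      simp [hcq_def, Qf, Fin.sum_univ_two]
    have hlap : lap u z = iteratedFDeriv ℝ 2 u z ![ev 0, ev 0]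
        + iteratedFDeriv ℝ 2 u z ![ev 1, ev 1] := by
      simp [lap, Fin.sum_univ_two, ev]
    have hfrac : (2*cq - 4*(zc 0)^2)/cq^2 + (2*cq - 4*(zc 1)^2)/cq^2 = 0 := by
      rw [← add_div]
      have : 2*cq - 4*(zc 0)^2 + (2*cq - 4*(zc 1)^2) = 0 := by nlinarith
      rw [this, zero_div]
    have hfrac2 : β/2 * ((2*cq - 4*(zc 0)^2)/cq^2) + β/2 * ((2*cq - 4*(zc 1)^2)/cq^2) = 0 := by
      rw [← mul_add, hfrac, mul_zero]
    have hsup := hsuper z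
    rw [hlap] at hsup
    linarith [hεt]
  -- conclude
  have hvy := isMinOn_iff.mp hzmin y hyA
  have hQy : 0 ≤ Qf (y - x₀) := Qf_nonneg _
  have hεtr : εt * r₂^2 = ε := by
    rw [hεt_def]; field_simp
  simp only [hv_def] at hvy key
  nlinarith

theorem stmt0 (u : EuclideanSpace ℝ (Fin 2) → ℝ) (hu : ContDiff ℝ 2 u)
    (hpos : ∀ x, 0 < u x) (hsuper : ∀ x, lap u x ≤ 0) :
    ∀ x y, u x = u y := by
  have main : ∀ x₀ y : EuclideanSpace ℝ (Fin 2), u x₀ ≤ u y := by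
    intro x₀ y
    by_cases hxy : y = x₀
    · rw [hxy]
    have hr : 0 < ‖y - x₀‖ := by
      rw [norm_pos_iff, sub_ne_zero]; exact hxy
    set r : ℝ := ‖y - x₀‖ with hrdef
    apply le_of_forall_pos_le_add
    intro ε hε
    by_cases hsmall : u x₀ ≤ ε
    · linarith [hpos y]
    push_neg at hsmall
    set c₁ : ℝ := u x₀ - ε/2 with hc₁
    have hc₁pos : 0 < c₁ := by rw [hc₁]; linarith
    have hcont := Metric.continuousAt_iff.mp (hu.continuous.continuousAt (x := x₀))
    obtain ⟨δ, hδ, hδball⟩ := hcont (ε/2) (by linarith)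
    set r₁ : ℝ := min r δ / 2 with hr₁def
    have hr₁pos : 0 < r₁ := by rw [hr₁def]; positivity
    have hr₁r : r₁ < r := by
      rw [hr₁def]
      have := min_le_left r δ
      linarith
    have hr₁δ : r₁ < δ := by
      rw [hr₁def]
      have := min_le_right r δ
      linarith
    set L₁ : ℝ := Real.log r₁ with hL₁def
    set L : ℝ := Real.log r with hLdef
    have hLL : L₁ < L := Real.log_lt_log hr₁pos hr₁r
    set L₂ : ℝ := max (L + 1) (L₁ + 2*c₁*(L - L₁)/ε + 1) with hL₂def
    set r₂ : ℝ := Real.exp L₂ with hr₂def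
    have hL₂L : L + 1 ≤ L₂ := le_max_left _ _
    have hL₂b : L₁ + 2*c₁*(L-L₁)/ε + 1 ≤ L₂ := le_max_right _ _
    have hrr₂ : r < r₂ := by
      calc r = Real.exp L := (Real.exp_log hr).symm
        _ < Real.exp L₂ := Real.exp_lt_exp.mpr (by linarith)
    have hr₂pos : 0 < r₂ := Real.exp_pos _
    have hr₁r₂ : r₁ < r₂ := hr₁r.trans hrr₂
    have hD : 0 < L₂ - L₁ := by linarith
    set β : ℝ := -c₁ / (L₂ - L₁) with hβ
    set α : ℝ := c₁ * L₂ / (L₂ - L₁) with hα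
    have hlogr₂ : Real.log r₂ = L₂ := Real.log_exp _
    have hval : ∀ s : ℝ, 0 < s →
        α + β/2 * Real.log (s^2) = c₁ * (L₂ - Real.log s) / (L₂ - L₁) := by
      intro s hs
      rw [Real.log_pow, hα, hβ]
      push_cast
      field_simp
      ring
    have hb1 : ∀ z : EuclideanSpace ℝ (Fin 2), ‖z - x₀‖ = r₁ →
        α + β/2 * Real.log (Qf (z - x₀)) ≤ u z := by
      intro z hz
      rw [Qf_eq, hz, hval r₁ hr₁pos]
      have heq : c₁ * (L₂ - Real.log r₁) / (L₂ - L₁) = c₁ := by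
        rw [← hL₁def]
        field_simp
      rw [heq]
      have hdist : dist z x₀ < δ := by rw [dist_eq_norm, hz]; linarith
      have habs := hδball hdist
      rw [Real.dist_eq] at habs
      have := abs_lt.mp habs
      rw [hc₁]
      linarith [this.1]
    have hb2 : ∀ z : EuclideanSpace ℝ (Fin 2), ‖z - x₀‖ = r₂ →
        α + β/2 * Real.log (Qf (z - x₀)) ≤ u z := by
      intro z hz
      rw [Qf_eq, hz, hval r₂ hr₂pos, hlogr₂]
      simp only [sub_self, mul_zero, zero_div]
      exact (hpos z).le
    have hcomp := comparison hu hsuper x₀ r₁ r₂ α β hr₁pos hr₁r₂ hb1 hb2 y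
      hr₁r.le hrr₂.le
    rw [Qf_eq, ← hrdef, hval r hr, ← hLdef] at hcomp
    have key : c₁ * (L - L₁) / (L₂ - L₁) ≤ ε/2 := by
      rw [div_le_iff₀ hD]
      have h2 : ε * (2*c₁*(L-L₁)/ε) = 2*c₁*(L-L₁) := by field_simp
      nlinarith [hL₂b, hε, hc₁pos, hLL]
    have heq2 : c₁ * (L₂ - L)/(L₂-L₁) = c₁ - c₁*(L - L₁)/(L₂-L₁) := by
      field_simp
      ring
    rw [heq2] at hcomp
    rw [hc₁] at hcomp key
    linarith
  intro x y
  exact le_antisymm (main x y) (main y x)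
end

section
/- Let K_{α,β}(x) = |x|^{-α} log^{β}(1+|x|) with 0 ≤ α ≤ N and β > α − N. If f ∈ L¹_loc(ℝᴺ) is nonnegative with ∫_{B_{1/2}} f > 0, then there is C > 0 such that (K_{α,β} * f)(x) ≥ C |x|^{-α} log^{β}(1+|x|) for all |x| ≥ 1. -/
open MeasureTheory Real
open scoped ENNReal

lemma keylemma {N : ℕ} (α β : ℝ) (hα0 : 0 ≤ α) (x y : EuclideanSpace ℝ (Fin N))
    (hx : 1 ≤ ‖x‖) (hy : ‖y‖ < 1/2) :
    (3/2 : ℝ) ^ (-α) * (2 : ℝ) ^ (-|β|) * (‖x‖ ^ (-α) * (Real.log (1 + ‖x‖)) ^ β)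
      ≤ Kab α β (x - y) := by
  set r := ‖x - y‖ with hr
  have hr1 : ‖x‖ / 2 ≤ r := by
    have h1 : ‖x‖ - ‖y‖ ≤ r := norm_sub_norm_le x y
    linarith
  have hr2 : r ≤ 3 / 2 * ‖x‖ := by
    have h1 : r ≤ ‖x‖ + ‖y‖ := norm_sub_le x y
    linarith
  have hrpos : 0 < r := by linarith
  have hxpos : (0 : ℝ) < ‖x‖ := by linarith
  -- power part
  have hA : (3/2 : ℝ) ^ (-α) * ‖x‖ ^ (-α) ≤ r ^ (-α) := by
    have h1 : ((3/2 : ℝ) * ‖x‖) ^ (-α) ≤ r ^ (-α) :=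
      Real.rpow_le_rpow_of_nonpos hrpos hr2 (by linarith)
    rwa [Real.mul_rpow (by norm_num) (le_of_lt hxpos)] at h1
  -- log part
  set L := Real.log (1 + ‖x‖) with hL
  set LR := Real.log (1 + r) with hLR
  have hLpos : 0 < L := Real.log_pos (by linarith)
  have hB1 : L / 2 ≤ LR := by
    have hsq : 1 + ‖x‖ ≤ (1 + r) ^ 2 := by nlinarith
    have h1 : L ≤ Real.log ((1 + r) ^ 2) := Real.log_le_log (by linarith) hsq
    rw [Real.log_pow] at h1
    push_cast at h1
    linarith
  have hB2 : LR ≤ 2 * L := by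
    have hsq : 1 + r ≤ (1 + ‖x‖) ^ 2 := by nlinarith
    have h1 : LR ≤ Real.log ((1 + ‖x‖) ^ 2) := Real.log_le_log (by linarith) hsq
    rw [Real.log_pow] at h1
    push_cast at h1
    linarith
  have hLRpos : 0 < LR := by linarith
  have hB : (2 : ℝ) ^ (-|β|) * L ^ β ≤ LR ^ β := by
    rcases le_or_gt 0 β with hb | hb
    · rw [abs_of_nonneg hb]
      have h1 : ((2 : ℝ)⁻¹ * L) ^ β ≤ LR ^ β :=
        Real.rpow_le_rpow (by positivity) (by linarith) hb
      rwa [Real.mul_rpow (by norm_num) hLpos.le, Real.inv_rpow (by norm_num),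
        ← Real.rpow_neg (by norm_num)] at h1
    · rw [abs_of_neg hb, neg_neg]
      have h1 : ((2 : ℝ) * L) ^ β ≤ LR ^ β :=
        Real.rpow_le_rpow_of_nonpos hLRpos hB2 hb.le
      rwa [Real.mul_rpow (by norm_num) hLpos.le] at h1
  have hrw : (3/2 : ℝ) ^ (-α) * (2 : ℝ) ^ (-|β|) * (‖x‖ ^ (-α) * L ^ β)
      = ((3/2 : ℝ) ^ (-α) * ‖x‖ ^ (-α)) * ((2 : ℝ) ^ (-|β|) * L ^ β) := by ring
  rw [hrw]
  have h2nn : (0 : ℝ) ≤ (2 : ℝ) ^ (-|β|) * L ^ β := by positivity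
  calc ((3/2 : ℝ) ^ (-α) * ‖x‖ ^ (-α)) * ((2 : ℝ) ^ (-|β|) * L ^ β)
      ≤ r ^ (-α) * ((2 : ℝ) ^ (-|β|) * L ^ β) :=
        mul_le_mul_of_nonneg_right hA h2nn
    _ ≤ r ^ (-α) * LR ^ β := mul_le_mul_of_nonneg_left hB (Real.rpow_nonneg hrpos.le _)
    _ = Kab α β (x - y) := rfl

theorem stmt2 (N : ℕ) (hN : 1 ≤ N) (α β : ℝ) (hα0 : 0 ≤ α) (hαN : α ≤ N)
    (hβ : α - N < β) (f : EuclideanSpace ℝ (Fin N) → ℝ)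
    (hf : LocallyIntegrable f volume) (hf0 : ∀ x, 0 ≤ f x)
    (hfpos : 0 < ∫ x in Metric.ball (0 : EuclideanSpace ℝ (Fin N)) (1/2), f x) :
    ∃ C > 0, ∀ x : EuclideanSpace ℝ (Fin N), 1 ≤ ‖x‖ →
      ENNReal.ofReal (C * (‖x‖ ^ (-α) * (Real.log (1 + ‖x‖)) ^ β)) ≤ convKL α β f x := by
  set B : Set (EuclideanSpace ℝ (Fin N)) := Metric.ball 0 (1/2) with hB
  set I : ℝ := ∫ x in B, f x with hIdef
  set c : ℝ := (3/2 : ℝ) ^ (-α) * (2 : ℝ) ^ (-|β|) with hcdef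
  have hcpos : 0 < c :=
    mul_pos (Real.rpow_pos_of_pos (by norm_num) _) (Real.rpow_pos_of_pos (by norm_num) _)
  have hfint : IntegrableOn f B volume :=
    (hf.integrableOn_isCompact (isCompact_closedBall (0 : EuclideanSpace ℝ (Fin N)) (1/2))).mono_set
      Metric.ball_subset_closedBall
  have hfm : AEMeasurable (fun y => ENNReal.ofReal (f y)) (volume.restrict B) :=
    ENNReal.measurable_ofReal.comp_aemeasurable hfint.aemeasurable
  refine ⟨c * I, mul_pos hcpos hfpos, fun x hx => ?_⟩
  set P : ℝ := ‖x‖ ^ (-α) * (Real.log (1 + ‖x‖)) ^ β with hPdef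
  have hPnn : 0 ≤ P :=
    mul_nonneg (Real.rpow_nonneg (norm_nonneg _) _)
      (Real.rpow_nonneg (Real.log_nonneg (by linarith)) _)
  have key : ∀ y ∈ B, c * P * f y ≤ Kab α β (x - y) * f y := fun y hy =>
    mul_le_mul_of_nonneg_right (keylemma α β hα0 x y hx (by rw [hB, Metric.mem_ball, dist_zero_right] at hy; exact hy)) (hf0 y)
  calc ENNReal.ofReal (c * I * P)
      = ENNReal.ofReal (c * P) * ENNReal.ofReal I := by
        rw [show c * I * P = c * P * I by ring, ENNReal.ofReal_mul (by positivity)]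
    _ = ENNReal.ofReal (c * P) * ∫⁻ y in B, ENNReal.ofReal (f y) := by
        rw [MeasureTheory.ofReal_integral_eq_lintegral_ofReal hfint
          (Filter.Eventually.of_forall fun y => hf0 y)]
    _ = ∫⁻ y in B, ENNReal.ofReal (c * P) * ENNReal.ofReal (f y) :=
        (lintegral_const_mul'' _ hfm).symm
    _ = ∫⁻ y in B, ENNReal.ofReal (c * P * f y) := by
        refine lintegral_congr fun y => ?_
        exact (ENNReal.ofReal_mul (by positivity)).symm
    _ ≤ ∫⁻ y in B, ENNReal.ofReal (Kab α β (x - y) * f y) := by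
        refine lintegral_mono_ae ((ae_restrict_iff' measurableSet_ball).mpr
          (Filter.Eventually.of_forall fun y hy => ENNReal.ofReal_le_ofReal (key y hy)))
    _ ≤ ∫⁻ y, ENNReal.ofReal (Kab α β (x - y) * f y) := setLIntegral_le_lintegral _ _
    _ = convKL α β f x := rfl
end

section
/- Let K_{α,β}(x) = |x|^{-α} log^{β}(1+|x|) with 0 ≤ α ≤ N, β ≤ 0 and β > α − N. If f ∈ L¹_loc(ℝᴺ) is nonnegative and satisfies f(x) ≥ c|x|^{-N} for |x| ≥ 1 (some c > 0), then there exists C > 0 such that (K_{α,β} * f)(x) ≥ C |x|^{-α} log^{1+β}(1+|x|) for all |x| ≥ 1. -/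
open MeasureTheory Real
open Metric
open scoped ENNReal

set_option maxHeartbeats 1000000 in
lemma core_annulus {N : ℕ} (hN : 1 ≤ N) {α β : ℝ} (hα0 : 0 ≤ α) (hαN : α ≤ N)
    (hβ0 : β ≤ 0) (hβ : -(N:ℝ) ≤ β) {f : EuclideanSpace ℝ (Fin N) → ℝ}
    (hf0 : ∀ x, 0 ≤ f x) {c : ℝ} (hc : 0 < c)
    (hlow : ∀ x : EuclideanSpace ℝ (Fin N), 1 ≤ ‖x‖ → c * ‖x‖ ^ (-(N : ℝ)) ≤ f x)
    (x : EuclideanSpace ℝ (Fin N)) (hx : 1 ≤ ‖x‖) (r : ℝ) (hr : 1 ≤ r)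
    (hzone : 2*r ≤ ‖x‖/2 ∨ 2*‖x‖ ≤ r) (hr4 : 2*r ≤ 4*‖x‖) :
    ENNReal.ofReal
      ((c * (volume (ball (0:EuclideanSpace ℝ (Fin N)) 1)).toReal
          * (5:ℝ)^(-(N:ℝ)) * (5:ℝ)^(-(N:ℝ)) / 2) * (‖x‖^(-α) * (Real.log (1+‖x‖))^β))
      ≤ ∫⁻ y in ball (0:EuclideanSpace ℝ (Fin N)) (2*r) \ closedBall 0 r,
          ENNReal.ofReal (Kab α β (x-y) * f y) := by
  haveI : Nontrivial (EuclideanSpace ℝ (Fin N)) :=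
    Module.nontrivial_of_finrank_pos (R := ℝ) (by rw [finrank_euclideanSpace_fin]; omega)
  set X := ‖x‖ with hX
  set L := Real.log (1 + X) with hLdef
  set q : ℝ := (5:ℝ)^(-(N:ℝ)) with hq
  set t : ℝ := (2*r)^(-(N:ℝ)) with htdef
  set vr : ℝ := (volume (ball (0:EuclideanSpace ℝ (Fin N)) 1)).toReal with hvr
  have hX0 : (0:ℝ) < X := by linarith
  have hr0 : (0:ℝ) < r := by linarith
  have h2r : (0:ℝ) < 2*r := by linarith
  have hL0 : (0:ℝ) < L := Real.log_pos (by linarith)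
  have hq0 : (0:ℝ) < q := Real.rpow_pos_of_pos (by norm_num) _
  have ht0 : (0:ℝ) < t := Real.rpow_pos_of_pos h2r _
  have hvr0 : (0:ℝ) < vr := by
    rw [hvr]
    exact ENNReal.toReal_pos (measure_ball_pos _ _ one_pos).ne' measure_ball_lt_top.ne
  have hXa0 : (0:ℝ) ≤ X^(-α) := Real.rpow_nonneg hX0.le _
  have hLb0 : (0:ℝ) ≤ L^β := Real.rpow_nonneg hL0.le _
  set b : ℝ := (q * X^(-α) * (q * L^β)) * (c * t) with hbdef
  set A : Set (EuclideanSpace ℝ (Fin N)) := ball (0:EuclideanSpace ℝ (Fin N)) (2*r) \ closedBall 0 r with hA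
  have hAmeas : MeasurableSet A := measurableSet_ball.diff measurableSet_closedBall
  -- pointwise bound on A
  have hpt : ∀ y ∈ A, ENNReal.ofReal b ≤ ENNReal.ofReal (Kab α β (x-y) * f y) := by
    intro y hy
    obtain ⟨hy1, hy2⟩ := hy
    have hyn1 : ‖y‖ < 2*r := mem_ball_zero_iff.mp hy1
    have hyn2 : r < ‖y‖ := by
      by_contra h
      exact hy2 (mem_closedBall_zero_iff.mpr (not_lt.mp h))
    have hxylow : X/2 ≤ ‖x - y‖ := by
      rcases hzone with h | h
      · have h1 := norm_sub_norm_le x y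
        linarith
      · have h1 := norm_sub_norm_le y x
        rw [norm_sub_rev y x] at h1
        linarith
    have hxyhigh : ‖x - y‖ ≤ 5*X := by
      have := norm_sub_le x y
      linarith
    have hxy0 : (0:ℝ) < ‖x - y‖ := by linarith
    have h1 : q * X^(-α) ≤ ‖x-y‖^(-α) := by
      have a1 : (5*X)^(-α) ≤ ‖x-y‖^(-α) :=
        Real.rpow_le_rpow_of_nonpos hxy0 hxyhigh (neg_nonpos.mpr hα0)
      have a2 : ((5:ℝ)*X)^(-α) = (5:ℝ)^(-α) * X^(-α) :=
        Real.mul_rpow (by norm_num) hX0.le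
      have a3 : q ≤ (5:ℝ)^(-α) :=
        Real.rpow_le_rpow_of_exponent_le (by norm_num) (by linarith)
      calc q * X^(-α) ≤ (5:ℝ)^(-α) * X^(-α) := mul_le_mul_of_nonneg_right a3 hXa0
        _ = (5*X)^(-α) := a2.symm
        _ ≤ _ := a1
    have l0 : (0:ℝ) < Real.log (1 + ‖x-y‖) := Real.log_pos (by linarith)
    have h2 : q * L^β ≤ (Real.log (1 + ‖x-y‖))^β := by
      have hpow : (1:ℝ) + 5*X ≤ (1+X)^5 := by
        have h2X : (2:ℝ) ≤ 1+X := by linarith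
        have h16 : (2:ℝ)^4 ≤ (1+X)^4 := pow_le_pow_left₀ (by norm_num) h2X 4
        have : ((1:ℝ)+X)^5 = (1+X)^4 * (1+X) := by ring
        nlinarith
      have lu : Real.log (1 + ‖x-y‖) ≤ 5*L := by
        have h5 : (1:ℝ) + ‖x-y‖ ≤ (1+X)^5 := by linarith
        have := Real.log_le_log (by linarith : (0:ℝ) < 1 + ‖x-y‖) h5
        rw [Real.log_pow] at this
        push_cast at this
        linarith
      have a1 : (5*L)^β ≤ (Real.log (1 + ‖x-y‖))^β :=
        Real.rpow_le_rpow_of_nonpos l0 lu hβ0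
      have a2 : ((5:ℝ)*L)^β = (5:ℝ)^β * L^β := Real.mul_rpow (by norm_num) hL0.le
      have a3 : q ≤ (5:ℝ)^β :=
        Real.rpow_le_rpow_of_exponent_le (by norm_num) hβ
      calc q * L^β ≤ (5:ℝ)^β * L^β := mul_le_mul_of_nonneg_right a3 hLb0
        _ = (5*L)^β := a2.symm
        _ ≤ _ := a1
    have h3 : c * t ≤ f y := by
      have hy1' : (1:ℝ) ≤ ‖y‖ := by linarith
      have := hlow y hy1'
      have h4 : t ≤ ‖y‖^(-(N:ℝ)) :=
        Real.rpow_le_rpow_of_nonpos (by linarith) hyn1.le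
          (neg_nonpos.mpr (Nat.cast_nonneg N))
      nlinarith
    apply ENNReal.ofReal_le_ofReal
    have hKab : Kab α β (x-y) = ‖x-y‖^(-α) * (Real.log (1 + ‖x-y‖))^β := rfl
    rw [hbdef, hKab]
    have h12 : q * X^(-α) * (q * L^β) ≤ ‖x-y‖^(-α) * (Real.log (1 + ‖x-y‖))^β :=
      mul_le_mul h1 h2 (mul_nonneg hq0.le hLb0) (Real.rpow_nonneg hxy0.le _)
    exact mul_le_mul h12 h3 (mul_nonneg hc.le ht0.le)
      (mul_nonneg (Real.rpow_nonneg hxy0.le _) (Real.rpow_nonneg l0.le _))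
  -- measure of annulus
  have hsub : closedBall (0:EuclideanSpace ℝ (Fin N)) r ⊆ ball 0 (2*r) :=
    closedBall_subset_ball (by linarith)
  have hμ : volume A = ENNReal.ofReal ((2*r)^N - r^N) * volume (ball (0:EuclideanSpace ℝ (Fin N)) 1) := by
    rw [hA, measure_diff hsub measurableSet_closedBall.nullMeasurableSet
        measure_closedBall_lt_top.ne,
      Measure.addHaar_ball _ _ h2r.le, Measure.addHaar_closedBall _ _ hr0.le,
      finrank_euclideanSpace_fin,
      ENNReal.ofReal_sub _ (by positivity), ENNReal.sub_mul (fun _ _ => measure_ball_lt_top.ne)]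
  have hvreq : volume (ball (0:EuclideanSpace ℝ (Fin N)) 1) = ENNReal.ofReal vr :=
    (ENNReal.ofReal_toReal measure_ball_lt_top.ne).symm
  -- key real inequality
  have ht : t = ((2*r)^N : ℝ)⁻¹ := by
    rw [htdef, Real.rpow_neg h2r.le, Real.rpow_natCast]
  have hD : (1:ℝ)/2 ≤ t * ((2*r)^N - r^N) := by
    have hpowN : (2:ℝ) * r^N ≤ (2*r)^N := by
      rw [mul_pow]
      have h2N : (2:ℝ)^1 ≤ (2:ℝ)^N := pow_le_pow_right₀ one_le_two hN
      have hrN : (0:ℝ) < r^N := pow_pos hr0 N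
      nlinarith
    have hne : ((2*r)^N : ℝ) ≠ 0 := (pow_pos h2r N).ne'
    have h1 : t * (2*r)^N = 1 := by rw [ht]; field_simp
    have hrN : (0:ℝ) ≤ r^N := (pow_pos hr0 N).le
    nlinarith
  have hkey : c * vr * q * q / 2 * (X^(-α) * L^β) ≤ b * (((2*r)^N - r^N) * vr) := by
    have h0 : 0 ≤ c * vr * q * q * (X^(-α) * L^β) :=
      mul_nonneg (mul_nonneg (mul_nonneg (mul_nonneg hc.le hvr0.le) hq0.le) hq0.le)
        (mul_nonneg hXa0 hLb0)
    have hre : b * (((2*r)^N - r^N) * vr)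
        = (c * vr * q * q * (X^(-α) * L^β)) * (t * ((2*r)^N - r^N)) := by
      rw [hbdef]; ring
    rw [hre]
    calc c * vr * q * q / 2 * (X^(-α) * L^β)
        = (c * vr * q * q * (X^(-α) * L^β)) * (1/2) := by ring
      _ ≤ _ := mul_le_mul_of_nonneg_left hD h0
  calc ENNReal.ofReal (c * vr * q * q / 2 * (X^(-α) * L^β))
      ≤ ENNReal.ofReal (b * (((2*r)^N - r^N) * vr)) := ENNReal.ofReal_le_ofReal hkey
    _ = ENNReal.ofReal b * volume A := by
        have hsubnn : (0:ℝ) ≤ (2*r)^N - r^N := by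
          have := pow_le_pow_left₀ hr0.le (by linarith : r ≤ 2*r) N
          linarith
        rw [hμ, hvreq, ENNReal.ofReal_mul' (mul_nonneg hsubnn hvr0.le),
          ENNReal.ofReal_mul' hvr0.le]
    _ = ∫⁻ _ in A, ENNReal.ofReal b := (setLIntegral_const A _).symm
    _ ≤ ∫⁻ y in A, ENNReal.ofReal (Kab α β (x-y) * f y) := setLIntegral_mono' hAmeas hpt

set_option maxHeartbeats 1000000 in
theorem stmt3 (N : ℕ) (hN : 1 ≤ N) (α β : ℝ) (hα0 : 0 ≤ α) (hαN : α ≤ N)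
    (hβ0 : β ≤ 0) (hβ : α - N < β) (f : EuclideanSpace ℝ (Fin N) → ℝ)
    (hf : LocallyIntegrable f volume) (hf0 : ∀ x, 0 ≤ f x)
    (c : ℝ) (hc : 0 < c)
    (hlow : ∀ x : EuclideanSpace ℝ (Fin N), 1 ≤ ‖x‖ → c * ‖x‖ ^ (-(N : ℝ)) ≤ f x) :
    ∃ C > 0, ∀ x : EuclideanSpace ℝ (Fin N), 1 ≤ ‖x‖ →
      ENNReal.ofReal (C * (‖x‖ ^ (-α) * (Real.log (1 + ‖x‖)) ^ (1 + β))) ≤ convKL α β f x := by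
  have hβN : -(N:ℝ) ≤ β := by linarith
  set vr : ℝ := (volume (ball (0:EuclideanSpace ℝ (Fin N)) 1)).toReal with hvr
  have hvr0 : (0:ℝ) < vr :=
    ENNReal.toReal_pos (measure_ball_pos _ _ one_pos).ne' measure_ball_lt_top.ne
  set c2 : ℝ := c * vr * (5:ℝ)^(-(N:ℝ)) * (5:ℝ)^(-(N:ℝ)) / 2 with hc2def
  have hq0 : (0:ℝ) < (5:ℝ)^(-(N:ℝ)) := Real.rpow_pos_of_pos (by norm_num) _
  have hc2 : 0 < c2 := by
    rw [hc2def]; positivity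
  have hlog2 : 0 < Real.log 2 := Real.log_pos one_lt_two
  have hlog64 : Real.log 64 = 6 * Real.log 2 := by
    rw [show (64:ℝ) = 2^6 by norm_num, Real.log_pow]; push_cast; ring
  have hlog64pos : 0 < Real.log 64 := by rw [hlog64]; linarith
  refine ⟨c2 / (2 * Real.log 64), div_pos hc2 (by linarith), ?_⟩
  intro x hx
  set C : ℝ := c2 / (2 * Real.log 64) with hCdef
  set X : ℝ := ‖x‖ with hX
  set L : ℝ := Real.log (1 + X) with hLdef
  have hX0 : (0:ℝ) < X := by linarith
  have hL0 : (0:ℝ) < L := Real.log_pos (by linarith)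
  have hsplit : L^(1+β) = L * L^β := by rw [Real.rpow_add hL0, Real.rpow_one]
  have hP : (0:ℝ) ≤ X^(-α) * L^β :=
    mul_nonneg (Real.rpow_nonneg hX0.le _) (Real.rpow_nonneg hL0.le _)
  have hcore := core_annulus hN hα0 hαN hβ0 hβN hf0 hc hlow x hx
  show _ ≤ ∫⁻ y, ENNReal.ofReal (Kab α β (x-y) * f y)
  by_cases hbig : X ≤ 63
  · -- moderate x : one outer annulus
    have h1 := hcore (2*X) (by linarith) (Or.inr (le_refl _)) (by linarith)
    refine le_trans ?_ (le_trans h1 (setLIntegral_le_lintegral _ _))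
    apply ENNReal.ofReal_le_ofReal
    have hL64 : L ≤ Real.log 64 := Real.log_le_log (by linarith) (by linarith)
    have hCL : C * L ≤ c2 := by
      rw [hCdef, div_mul_eq_mul_div, div_le_iff₀ (by linarith)]
      nlinarith
    calc C * (X^(-α) * L^(1+β)) = (C*L) * (X^(-α) * L^β) := by rw [hsplit]; ring
      _ ≤ c2 * (X^(-α) * L^β) := mul_le_mul_of_nonneg_right hCL hP
  · push_neg at hbig
    set m := ⌊Real.logb 2 (X/4)⌋₊ with hm
    have hX4 : (1:ℝ) ≤ X/4 := by linarith
    have hfl : (m:ℝ) ≤ Real.logb 2 (X/4) :=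
      Nat.floor_le (Real.logb_nonneg one_lt_two hX4)
    have h2m : (2:ℝ)^m ≤ X/4 := by
      calc (2:ℝ)^m = (2:ℝ)^(m:ℝ) := (Real.rpow_natCast 2 m).symm
        _ ≤ (2:ℝ)^(Real.logb 2 (X/4)) := Real.rpow_le_rpow_of_exponent_le one_le_two hfl
        _ = X/4 := Real.rpow_logb (by norm_num) (by norm_num) (by linarith)
    have hmub : Real.logb 2 (X/4) < (m:ℝ)+1 := Nat.lt_floor_add_one _
    have hlogXd : Real.log (X/4) = Real.log X - Real.log 4 :=
      Real.log_div (by linarith) (by norm_num)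
    have hlog4 : Real.log 4 = 2*Real.log 2 := by
      rw [show (4:ℝ) = 2^2 by norm_num, Real.log_pow]; push_cast; ring
    have hup : Real.log X - 2*Real.log 2 < ((m:ℝ)+1) * Real.log 2 := by
      rw [Real.logb, hlogXd, hlog4, div_lt_iff₀ hlog2] at hmub
      linarith
    have hLle : L ≤ Real.log 2 + Real.log X := by
      have h1X : (1:ℝ) + X ≤ 2*X := by linarith
      have h := Real.log_le_log (by linarith) h1X
      rw [Real.log_mul (by norm_num) (by linarith : X ≠ 0)] at h
      rw [hLdef]; linarith
    have hlog32 : Real.log 32 = 5*Real.log 2 := by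
      rw [show (32:ℝ) = 2^5 by norm_num, Real.log_pow]; push_cast; ring
    have hlogX32 : Real.log 32 ≤ Real.log X := Real.log_le_log (by norm_num) (by linarith)
    have hLkey : L ≤ 2*((m:ℝ)+1)*Real.log 2 := by
      rw [hlog32] at hlogX32; linarith
    have hm1 : (0:ℝ) ≤ (m:ℝ)+1 := by positivity
    have hkeyR : C * (X^(-α) * L^(1+β)) ≤ ((m:ℝ)+1) * (c2 * (X^(-α) * L^β)) := by
      have hCL : C * L ≤ ((m:ℝ)+1) * c2 := by
        rw [hCdef, div_mul_eq_mul_div, div_le_iff₀ (by linarith)]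
        have e1 : c2 * L ≤ c2 * (2*((m:ℝ)+1)*Real.log 2) :=
          mul_le_mul_of_nonneg_left hLkey hc2.le
        have e2 : c2 * (2*((m:ℝ)+1)*Real.log 2) ≤ ((m:ℝ)+1) * c2 * (2*Real.log 64) := by
          rw [hlog64]
          nlinarith [mul_nonneg hm1 hc2.le]
        linarith
      calc C * (X^(-α) * L^(1+β)) = (C*L) * (X^(-α) * L^β) := by rw [hsplit]; ring
        _ ≤ (((m:ℝ)+1) * c2) * (X^(-α) * L^β) := mul_le_mul_of_nonneg_right hCL hP
        _ = ((m:ℝ)+1) * (c2 * (X^(-α) * L^β)) := by ring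
    set t : ℕ → Set (EuclideanSpace ℝ (Fin N)) :=
      fun k => ball 0 (2*(2:ℝ)^k) \ closedBall 0 ((2:ℝ)^k) with htdef
    have hann : ∀ k ∈ Finset.range (m+1),
        ENNReal.ofReal (c2 * (X^(-α) * L^β))
          ≤ ∫⁻ y in t k, ENNReal.ofReal (Kab α β (x-y) * f y) := by
      intro k hk
      have hk' : k ≤ m := Nat.lt_succ_iff.mp (Finset.mem_range.mp hk)
      have h2k : (1:ℝ) ≤ 2^k := one_le_pow₀ one_le_two
      have hzone : 2*(2:ℝ)^k ≤ X/2 := by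
        have : (2:ℝ)^k ≤ 2^m := pow_le_pow_right₀ one_le_two hk'
        linarith
      exact hcore ((2:ℝ)^k) h2k (Or.inl hzone) (by linarith)
    have hdisj : Set.PairwiseDisjoint ↑(Finset.range (m+1)) t := by
      have key : ∀ j k : ℕ, j < k → Disjoint (t j) (t k) := by
        intro j k hjk
        rw [Set.disjoint_left]
        rintro y ⟨hy1, -⟩ ⟨-, hy2⟩
        apply hy2
        rw [mem_closedBall_zero_iff]
        have h1 : ‖y‖ < 2*(2:ℝ)^j := mem_ball_zero_iff.mp hy1
        have h2 : 2*(2:ℝ)^j ≤ (2:ℝ)^k := by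
          have h3 : (2:ℝ)^(j+1) ≤ 2^k := pow_le_pow_right₀ one_le_two hjk
          rw [pow_succ] at h3; linarith
        linarith
      intro j hj k hk hjk
      rcases hjk.lt_or_gt with h | h
      · exact key j k h
      · exact (key k j h).symm
    have hmeas : ∀ k ∈ Finset.range (m+1), MeasurableSet (t k) :=
      fun k _ => measurableSet_ball.diff measurableSet_closedBall
    have hcast : ((m:ℝ)+1) = ((m+1 : ℕ) : ℝ) := by push_cast; ring
    calc ENNReal.ofReal (C * (X^(-α) * L^(1+β)))
        ≤ ENNReal.ofReal (((m:ℝ)+1) * (c2 * (X^(-α) * L^β))) :=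
          ENNReal.ofReal_le_ofReal hkeyR
      _ = ((m+1 : ℕ) : ℝ≥0∞) * ENNReal.ofReal (c2 * (X^(-α) * L^β)) := by
          rw [ENNReal.ofReal_mul hm1, hcast, ENNReal.ofReal_natCast]
      _ = ∑ _k ∈ Finset.range (m+1), ENNReal.ofReal (c2 * (X^(-α) * L^β)) := by
          rw [Finset.sum_const, Finset.card_range, nsmul_eq_mul]
      _ ≤ ∑ k ∈ Finset.range (m+1), ∫⁻ y in t k, ENNReal.ofReal (Kab α β (x-y) * f y) :=
          Finset.sum_le_sum hann
      _ = ∫⁻ y in ⋃ k ∈ Finset.range (m+1), t k, ENNReal.ofReal (Kab α β (x-y) * f y) :=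
          (lintegral_biUnion_finset hdisj hmeas _).symm
      _ ≤ ∫⁻ y, ENNReal.ofReal (Kab α β (x-y) * f y) := setLIntegral_le_lintegral _ _
end

section
/- Let K_{α,β}(x) = |x|^{-α} log^{β}(1+|x|) with 0 ≤ α ≤ N, β > α − N, and let f ≥ 0 satisfy f(x) ≥ c|x|^{-σ} log^{κ}(1+|x|) for |x| ≥ 1 with c > 0, σ ≥ 0, κ ∈ ℝ. If N − α − σ > 0, or if N − α − σ = 0 and 1 + β + κ ≥ 0, then (K_{α,β} * f)(x) = +∞ for every x with |x| ≥ 1. -/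
open MeasureTheory Real
open scoped ENNReal

private lemma rpow_sandwich {a A L t : ℝ} (ha : 1 ≤ a) (hA : 0 < A) (h1 : A ≤ L) (h2 : L ≤ a * A) :
    a ^ (-|t|) * A ^ t ≤ L ^ t := by
  rcases le_or_gt 0 t with ht | ht
  · rw [abs_of_nonneg ht]
    have h3 : A ^ t ≤ L ^ t := Real.rpow_le_rpow hA.le h1 ht
    have h4 : a ^ (-t) ≤ 1 := Real.rpow_le_one_of_one_le_of_nonpos ha (neg_nonpos.2 ht)
    nlinarith [Real.rpow_nonneg hA.le t, Real.rpow_nonneg (le_trans zero_le_one ha) (-t)]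
  · rw [abs_of_neg ht, neg_neg]
    have h3 : (a * A) ^ t ≤ L ^ t := Real.rpow_le_rpow_of_nonpos (hA.trans_le h1) h2 ht.le
    rwa [Real.mul_rpow (by linarith) hA.le] at h3

private lemma kab_low {N : ℕ} (α β : ℝ) (hα0 : 0 ≤ α)
    (x y : EuclideanSpace ℝ (Fin N)) (hy2 : 2 ≤ ‖y‖) (hyx : 2 * ‖x‖ ≤ ‖y‖) :
    (2:ℝ) ^ (-α) * ((4:ℝ) ^ (-|β|) * (2:ℝ) ^ (-β)) *
      (‖y‖ ^ (-α) * Real.log (1 + ‖y‖) ^ β) ≤ Kab α β (x - y) := by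
  set r := ‖y‖ with hr
  set s := ‖x - y‖ with hs
  have hr0 : (0:ℝ) < r := by linarith
  have hs1 : r / 2 ≤ s := by
    have h := norm_sub_norm_le y x
    have h2 : ‖y - x‖ = s := by rw [hs, norm_sub_rev]
    rw [h2] at h
    linarith [h, hyx]
  have hs2 : s ≤ 2 * r := by
    have h := norm_sub_le x y
    have : ‖x‖ ≤ r / 2 := by linarith
    linarith
  have hs0 : (0:ℝ) < s := by linarith
  set L := Real.log (1 + r) with hL
  set M := Real.log (1 + s) with hM
  have hL0 : 0 < L := Real.log_pos (by linarith)
  have hM0 : 0 ≤ M := Real.log_nonneg (by linarith)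
  have hMlow : L / 2 ≤ M := by
    have h1 : L ≤ Real.log ((1 + r/2) ^ 2) := by
      apply Real.log_le_log (by linarith)
      nlinarith
    rw [Real.log_pow] at h1
    have h2 : Real.log (1 + r/2) ≤ M := Real.log_le_log (by linarith) (by linarith)
    push_cast at h1
    linarith
  have hMhigh : M ≤ 4 * (L / 2) := by
    have h1 : M ≤ Real.log ((1 + r) ^ 2) := by
      apply Real.log_le_log (by linarith)
      nlinarith
    rw [Real.log_pow] at h1
    push_cast at h1
    linarith
  have hsand : (4:ℝ) ^ (-|β|) * (L / 2) ^ β ≤ M ^ β :=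
    rpow_sandwich (by norm_num) (by linarith) hMlow hMhigh
  have hhalf : (L / 2) ^ β = L ^ β * (2:ℝ) ^ (-β) := by
    rw [Real.div_rpow hL0.le (by norm_num), Real.rpow_neg (by norm_num), div_eq_mul_inv]
  have hMfin : (4:ℝ) ^ (-|β|) * (2:ℝ) ^ (-β) * L ^ β ≤ M ^ β := by
    calc (4:ℝ) ^ (-|β|) * (2:ℝ) ^ (-β) * L ^ β = (4:ℝ) ^ (-|β|) * (L / 2) ^ β := by
          rw [hhalf]; ring
      _ ≤ M ^ β := hsand
  have hsfin : (2:ℝ) ^ (-α) * r ^ (-α) ≤ s ^ (-α) := by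
    have h1 : (2 * r) ^ (-α) ≤ s ^ (-α) :=
      Real.rpow_le_rpow_of_nonpos hs0 hs2 (neg_nonpos.2 hα0)
    rwa [Real.mul_rpow (by norm_num) hr0.le] at h1
  have hKab : Kab α β (x - y) = s ^ (-α) * M ^ β := rfl
  rw [hKab]
  have hmul := mul_le_mul hsfin hMfin
    (by positivity)
    (Real.rpow_nonneg hs0.le _)
  calc (2:ℝ) ^ (-α) * ((4:ℝ) ^ (-|β|) * (2:ℝ) ^ (-β)) * (r ^ (-α) * L ^ β)
      = ((2:ℝ) ^ (-α) * r ^ (-α)) * ((4:ℝ) ^ (-|β|) * (2:ℝ) ^ (-β) * L ^ β) := by ring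
    _ ≤ s ^ (-α) * M ^ β := hmul

private lemma annulus_low (b q : ℝ) (hb : 0 ≤ b) (j : ℕ) (hj : 1 ≤ j) (r : ℝ)
    (hr1 : (2:ℝ) ^ j ≤ r) (hr2 : r ≤ (2:ℝ) ^ (j + 1)) :
    ((2:ℝ) ^ (-b) * ((3:ℝ) ^ (-|q|) * Real.log 2 ^ q)) *
      ((2:ℝ) ^ (-((j:ℝ) * b)) * (j:ℝ) ^ q) ≤ r ^ (-b) * Real.log (1 + r) ^ q := by
  have hlog2 : 0 < Real.log 2 := Real.log_pos (by norm_num)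
  have h2j : (2:ℝ) ≤ (2:ℝ) ^ j := by
    calc (2:ℝ) = 2 ^ 1 := (pow_one 2).symm
      _ ≤ 2 ^ j := pow_le_pow_right₀ (by norm_num) hj
  have hr0 : (0:ℝ) < r := by linarith
  set L := Real.log (1 + r) with hLdef
  have hfac1 : (2:ℝ) ^ (-b) * (2:ℝ) ^ (-((j:ℝ) * b)) ≤ r ^ (-b) := by
    have h1 : ((2:ℝ) ^ (j + 1)) ^ (-b) ≤ r ^ (-b) :=
      Real.rpow_le_rpow_of_nonpos hr0 hr2 (neg_nonpos.2 hb)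
    have h2 : ((2:ℝ) ^ (j + 1)) ^ (-b) = (2:ℝ) ^ (-b) * (2:ℝ) ^ (-((j:ℝ) * b)) := by
      rw [← Real.rpow_natCast (2:ℝ) (j + 1), ← Real.rpow_mul (by norm_num)]
      rw [← Real.rpow_add (by norm_num : (0:ℝ) < 2)]
      congr 1
      push_cast
      ring
    rwa [h2] at h1
  have hA0 : 0 < (j:ℝ) * Real.log 2 := by
    have : (1:ℝ) ≤ (j:ℝ) := by exact_mod_cast hj
    positivity
  have hlow2 : (j:ℝ) * Real.log 2 ≤ L := by
    have h1 : Real.log ((2:ℝ) ^ j) ≤ L :=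
      Real.log_le_log (by positivity) (by linarith)
    rwa [Real.log_pow] at h1
  have hhigh2 : L ≤ 3 * ((j:ℝ) * Real.log 2) := by
    have h1 : L ≤ Real.log ((2:ℝ) ^ (j + 2)) := by
      apply Real.log_le_log (by linarith)
      have h2 : (2:ℝ) ^ (j + 2) = 2 * 2 ^ (j + 1) := by ring
      rw [h2]
      nlinarith
    rw [Real.log_pow] at h1
    have hj1 : (1:ℝ) ≤ (j:ℝ) := by exact_mod_cast hj
    push_cast at h1
    nlinarith
  have hsand : (3:ℝ) ^ (-|q|) * ((j:ℝ) * Real.log 2) ^ q ≤ L ^ q :=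
    rpow_sandwich (by norm_num) hA0 hlow2 hhigh2
  have hmulr : ((j:ℝ) * Real.log 2) ^ q = (j:ℝ) ^ q * Real.log 2 ^ q :=
    Real.mul_rpow (by positivity) hlog2.le
  have hfac2 : (3:ℝ) ^ (-|q|) * Real.log 2 ^ q * (j:ℝ) ^ q ≤ L ^ q := by
    calc (3:ℝ) ^ (-|q|) * Real.log 2 ^ q * (j:ℝ) ^ q
        = (3:ℝ) ^ (-|q|) * ((j:ℝ) * Real.log 2) ^ q := by rw [hmulr]; ring
      _ ≤ L ^ q := hsand
  have hmul := mul_le_mul hfac1 hfac2 (by positivity) (Real.rpow_nonneg hr0.le _)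
  calc ((2:ℝ) ^ (-b) * ((3:ℝ) ^ (-|q|) * Real.log 2 ^ q)) *
        ((2:ℝ) ^ (-((j:ℝ) * b)) * (j:ℝ) ^ q)
      = ((2:ℝ) ^ (-b) * (2:ℝ) ^ (-((j:ℝ) * b))) *
        ((3:ℝ) ^ (-|q|) * Real.log 2 ^ q * (j:ℝ) ^ q) := by ring
    _ ≤ r ^ (-b) * L ^ q := hmul

private lemma tsum_harmonic_top (C : ℝ) (hC : 0 < C) (m : ℕ) :
    ∑' k : ℕ, ENNReal.ofReal (C * (((m + k : ℕ) : ℝ))⁻¹) = ⊤ := by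
  by_contra h
  have h' : (∑' k : ℕ, ((Real.toNNReal (C * (((m + k : ℕ) : ℝ))⁻¹) : NNReal) : ℝ≥0∞)) ≠ ⊤ := h
  have hs : Summable fun k : ℕ => Real.toNNReal (C * (((m + k : ℕ) : ℝ))⁻¹) :=
    ENNReal.tsum_coe_ne_top_iff_summable.1 h'
  have hs2 : Summable fun k : ℕ => C * (((m + k : ℕ) : ℝ))⁻¹ := by
    have h2 := NNReal.summable_coe.2 hs
    refine h2.congr fun k => ?_
    exact Real.coe_toNNReal _ (mul_nonneg hC.le (by positivity))
  have hs3 : Summable fun k : ℕ => (((m + k : ℕ) : ℝ))⁻¹ := by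
    have h3 := hs2.mul_left C⁻¹
    refine h3.congr fun k => ?_
    rw [← mul_assoc, inv_mul_cancel₀ hC.ne', one_mul]
  have hs4 : Summable fun k : ℕ => (((k + m : ℕ) : ℝ))⁻¹ := by
    refine hs3.congr fun k => ?_
    rw [Nat.add_comm]
  have hs5 : Summable fun n : ℕ => ((n : ℝ))⁻¹ :=
    (summable_nat_add_iff (f := fun n : ℕ => ((n : ℝ))⁻¹) m).1 hs4
  exact Real.not_summable_natCast_inv hs5

private lemma tendsto_case1 (C δ q : ℝ) (hC : 0 < C) (hδ : 0 < δ) :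
    Filter.Tendsto (fun k : ℕ => C * ((2:ℝ) ^ ((k:ℝ) * δ) * (k:ℝ) ^ q))
      Filter.atTop Filter.atTop := by
  have hlog2 : 0 < Real.log 2 := Real.log_pos (by norm_num)
  have hb : 0 < Real.log 2 * δ := mul_pos hlog2 hδ
  have base := tendsto_exp_mul_div_rpow_atTop (-q) (Real.log 2 * δ) hb
  have base2 : Filter.Tendsto (fun t : ℝ => (2:ℝ) ^ (t * δ) * t ^ q)
      Filter.atTop Filter.atTop := by
    apply base.congr'
    filter_upwards [Filter.eventually_ge_atTop (1:ℝ)] with t ht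
    rw [Real.rpow_def_of_pos (by norm_num : (0:ℝ) < 2) (t * δ)]
    have h1 : t ^ (-q) = (t ^ q)⁻¹ := Real.rpow_neg (by linarith) q
    rw [h1, div_eq_mul_inv, inv_inv,
      show Real.log 2 * δ * t = Real.log 2 * (t * δ) by ring]
  have comp := base2.comp (tendsto_natCast_atTop_atTop (R := ℝ))
  exact comp.const_mul_atTop hC

theorem stmt4 (N : ℕ) (hN : 1 ≤ N) (α β σ κ c : ℝ) (hα0 : 0 ≤ α) (hαN : α ≤ N)
    (hβ : α - N < β) (hσ : 0 ≤ σ) (hc : 0 < c)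
    (f : EuclideanSpace ℝ (Fin N) → ℝ)
    (hf : LocallyIntegrable f volume) (hf0 : ∀ x, 0 ≤ f x)
    (hlow : ∀ x : EuclideanSpace ℝ (Fin N), 1 ≤ ‖x‖ →
      c * (‖x‖ ^ (-σ) * (Real.log (1 + ‖x‖)) ^ κ) ≤ f x)
    (hcase : 0 < (N : ℝ) - α - σ ∨ ((N : ℝ) - α - σ = 0 ∧ 0 ≤ 1 + β + κ)) :
    ∀ x : EuclideanSpace ℝ (Fin N), 1 ≤ ‖x‖ → convKL α β f x = ⊤ := by
  intro x hx
  classical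
  have hlog2 : 0 < Real.log 2 := Real.log_pos (by norm_num)
  set b := α + σ with hbdef
  set q := β + κ with hqdef
  have hb0 : 0 ≤ b := add_nonneg hα0 hσ
  set Cp : ℝ := (2:ℝ) ^ (-α) * ((4:ℝ) ^ (-|β|) * (2:ℝ) ^ (-β)) with hCpdef
  set Ca : ℝ := (2:ℝ) ^ (-b) * ((3:ℝ) ^ (-|q|) * Real.log 2 ^ q) with hCadef
  have hCp0 : 0 < Cp := by positivity
  have hCa0 : 0 < Ca :=
    mul_pos (Real.rpow_pos_of_pos two_pos _)
      (mul_pos (Real.rpow_pos_of_pos (by norm_num) _) (Real.rpow_pos_of_pos hlog2 _))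
  set C₀ : ℝ := c * Cp * Ca with hC₀def
  have hC₀0 : 0 < C₀ := by positivity
  -- choice of k₀
  obtain ⟨m, hm⟩ := exists_nat_ge (2 * ‖x‖)
  set k₀ := m + 1 with hk₀def
  have hk₀1 : 1 ≤ k₀ := Nat.le_add_left 1 m
  have hk₀x : 2 * ‖x‖ ≤ (2:ℝ) ^ k₀ := by
    have h1 : (m:ℝ) ≤ 2 ^ m := by exact_mod_cast (Nat.lt_two_pow_self (n := m)).le
    have h2 : (2:ℝ) ^ m ≤ 2 ^ k₀ := pow_le_pow_right₀ one_le_two (Nat.le_succ m)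
    linarith
  -- the annuli
  set S : ℕ → Set (EuclideanSpace ℝ (Fin N)) :=
    fun k => {y | (2:ℝ) ^ (k₀ + k) ≤ ‖y‖} ∩ Metric.ball 0 ((2:ℝ) ^ (k₀ + k + 1)) with hSdef
  have hSm : ∀ k, MeasurableSet (S k) := fun k =>
    ((isClosed_le continuous_const continuous_norm).measurableSet).inter measurableSet_ball
  have hSd : Pairwise (Function.onFun Disjoint S) := by
    have key : ∀ k l, k < l → Disjoint (S k) (S l) := by
      intro k l hkl
      rw [Set.disjoint_left]
      rintro y ⟨-, hy2⟩ ⟨hy3, -⟩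
      rw [Metric.mem_ball, dist_zero_right] at hy2
      have h1 : (2:ℝ) ^ (k₀ + k + 1) ≤ 2 ^ (k₀ + l) :=
        pow_le_pow_right₀ one_le_two (by omega)
      have h2 : (2:ℝ) ^ (k₀ + l) ≤ ‖y‖ := hy3
      linarith
    intro k l hkl
    rcases hkl.lt_or_gt with h | h
    · exact key k l h
    · exact (key l k h).symm
  haveI hNontriv : Nontrivial (EuclideanSpace ℝ (Fin N)) := by
    refine nontrivial_of_ne (EuclideanSpace.single (⟨0, hN⟩ : Fin N) (1:ℝ)) 0 ?_
    intro h
    have h2 := congrArg norm h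
    rw [EuclideanSpace.norm_single, norm_zero] at h2
    norm_num at h2
  set V : ℝ≥0∞ := volume (Metric.ball (0 : EuclideanSpace ℝ (Fin N)) 1) with hVdef
  have hV0 : 0 < V := Metric.measure_ball_pos volume 0 one_pos
  have hVtop : V ≠ ⊤ := measure_ball_lt_top.ne
  have hball : ∀ R : ℝ, 0 ≤ R →
      volume (Metric.ball (0 : EuclideanSpace ℝ (Fin N)) R) = ENNReal.ofReal (R ^ N) * V := by
    intro R hR
    rw [Measure.addHaar_ball volume 0 hR, finrank_euclideanSpace_fin]
  -- volume lower bound for annuli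
  have hvol : ∀ k : ℕ, ENNReal.ofReal (((2:ℝ) ^ (k₀ + k)) ^ N) * V ≤ volume (S k) := by
    intro k
    set j := k₀ + k with hjdef
    have hR1 : (0:ℝ) < 2 ^ j := by positivity
    have hR2 : (0:ℝ) < 2 ^ (j + 1) := by positivity
    have hfin : ENNReal.ofReal (((2:ℝ) ^ j) ^ N) * V ≠ ⊤ :=
      ENNReal.mul_ne_top ENNReal.ofReal_ne_top hVtop
    have hset : S k = Metric.ball (0 : EuclideanSpace ℝ (Fin N)) (2 ^ (j + 1)) \
        Metric.ball 0 (2 ^ j) := by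
      ext y
      simp only [hSdef, Set.mem_inter_iff, Set.mem_setOf_eq, Metric.mem_ball, dist_zero_right,
        Set.mem_diff, not_lt]
      tauto
    rw [hset, measure_diff
        (Metric.ball_subset_ball (pow_le_pow_right₀ one_le_two (Nat.le_succ j)))
        measurableSet_ball.nullMeasurableSet measure_ball_lt_top.ne,
      hball _ hR2.le, hball _ hR1.le]
    have hpow : 2 * ((2:ℝ) ^ j) ^ N ≤ ((2:ℝ) ^ (j + 1)) ^ N := by
      have he : ((2:ℝ) ^ (j + 1)) ^ N = 2 ^ N * ((2:ℝ) ^ j) ^ N := by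
        rw [pow_succ, mul_pow]; ring
      rw [he]
      have h2N : (2:ℝ) ≤ 2 ^ N := by
        calc (2:ℝ) = 2 ^ 1 := (pow_one 2).symm
          _ ≤ 2 ^ N := pow_le_pow_right₀ one_le_two hN
      nlinarith [pow_pos hR1 N]
    calc ENNReal.ofReal (((2:ℝ) ^ j) ^ N) * V
        = (ENNReal.ofReal (((2:ℝ) ^ j) ^ N) + ENNReal.ofReal (((2:ℝ) ^ j) ^ N)) * V -
            ENNReal.ofReal (((2:ℝ) ^ j) ^ N) * V := by
          rw [add_mul, ENNReal.add_sub_cancel_right hfin]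
      _ ≤ ENNReal.ofReal (((2:ℝ) ^ (j + 1)) ^ N) * V - ENNReal.ofReal (((2:ℝ) ^ j) ^ N) * V := by
          apply tsub_le_tsub_right
          apply mul_le_mul_left
          rw [← ENNReal.ofReal_add (by positivity) (by positivity)]
          exact ENNReal.ofReal_le_ofReal (by linarith)
  -- pointwise lower bound on each annulus
  have hpoint : ∀ k : ℕ, ∀ y ∈ S k,
      C₀ * ((2:ℝ) ^ (-(((k₀ + k : ℕ):ℝ) * b)) * ((k₀ + k : ℕ):ℝ) ^ q)
        ≤ Kab α β (x - y) * f y := by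
    intro k y hy
    obtain ⟨hy1, hy2⟩ := hy
    rw [Metric.mem_ball, dist_zero_right] at hy2
    have hy1' : (2:ℝ) ^ (k₀ + k) ≤ ‖y‖ := hy1
    have h2k : (2:ℝ) ≤ 2 ^ (k₀ + k) := by
      calc (2:ℝ) = 2 ^ 1 := (pow_one 2).symm
        _ ≤ _ := pow_le_pow_right₀ one_le_two (le_trans hk₀1 (Nat.le_add_right k₀ k))
    have hyn2 : 2 ≤ ‖y‖ := le_trans h2k hy1'
    have hyx : 2 * ‖x‖ ≤ ‖y‖ :=
      le_trans (hk₀x.trans (pow_le_pow_right₀ one_le_two (Nat.le_add_right k₀ k))) hy1'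
    have hy1'' : 1 ≤ ‖y‖ := by linarith
    have hKlow := kab_low α β hα0 x y hyn2 hyx
    have hflow := hlow y hy1''
    have hyr0 : (0:ℝ) < ‖y‖ := by linarith
    have hL0 : 0 < Real.log (1 + ‖y‖) := Real.log_pos (by linarith)
    have hfn : (0:ℝ) ≤ c * (‖y‖ ^ (-σ) * Real.log (1 + ‖y‖) ^ κ) :=
      mul_nonneg hc.le (mul_nonneg (Real.rpow_nonneg hyr0.le _) (Real.rpow_nonneg hL0.le _))
    have hKn : (0:ℝ) ≤ Kab α β (x - y) :=
      mul_nonneg (Real.rpow_nonneg (norm_nonneg _) _)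
        (Real.rpow_nonneg (Real.log_nonneg (by linarith [norm_nonneg (x - y)])) _)
    have hmul := mul_le_mul hKlow hflow hfn hKn
    have hcomb : (Cp * (‖y‖ ^ (-α) * Real.log (1 + ‖y‖) ^ β)) *
        (c * (‖y‖ ^ (-σ) * Real.log (1 + ‖y‖) ^ κ))
        = (c * Cp) * (‖y‖ ^ (-b) * Real.log (1 + ‖y‖) ^ q) := by
      have e1 : ‖y‖ ^ (-α) * ‖y‖ ^ (-σ) = ‖y‖ ^ (-b) := by
        rw [← Real.rpow_add hyr0]; congr 1; rw [hbdef]; ring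
      have e2 : Real.log (1 + ‖y‖) ^ β * Real.log (1 + ‖y‖) ^ κ
          = Real.log (1 + ‖y‖) ^ q := by
        rw [← Real.rpow_add hL0]
      calc (Cp * (‖y‖ ^ (-α) * Real.log (1 + ‖y‖) ^ β)) *
            (c * (‖y‖ ^ (-σ) * Real.log (1 + ‖y‖) ^ κ))
          = (c * Cp) * ((‖y‖ ^ (-α) * ‖y‖ ^ (-σ)) *
              (Real.log (1 + ‖y‖) ^ β * Real.log (1 + ‖y‖) ^ κ)) := by ring
        _ = (c * Cp) * (‖y‖ ^ (-b) * Real.log (1 + ‖y‖) ^ q) := by rw [e1, e2]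
    have hann := annulus_low b q hb0 (k₀ + k) (le_trans hk₀1 (Nat.le_add_right k₀ k))
      ‖y‖ hy1' hy2.le
    calc C₀ * ((2:ℝ) ^ (-(((k₀ + k : ℕ):ℝ) * b)) * ((k₀ + k : ℕ):ℝ) ^ q)
        = (c * Cp) * (Ca * ((2:ℝ) ^ (-(((k₀ + k : ℕ):ℝ) * b)) * ((k₀ + k : ℕ):ℝ) ^ q)) := by
          rw [hC₀def]; ring
      _ ≤ (c * Cp) * (‖y‖ ^ (-b) * Real.log (1 + ‖y‖) ^ q) :=
          mul_le_mul_of_nonneg_left hann (by positivity)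
      _ = (Cp * (‖y‖ ^ (-α) * Real.log (1 + ‖y‖) ^ β)) *
            (c * (‖y‖ ^ (-σ) * Real.log (1 + ‖y‖) ^ κ)) := hcomb.symm
      _ ≤ Kab α β (x - y) * f y := hmul
  -- the model sequence
  set ψ : ℕ → ℝ := fun j => C₀ * ((2:ℝ) ^ ((j:ℝ) * ((N:ℝ) - b)) * (j:ℝ) ^ q) with hψdef
  have hψeq : ∀ j : ℕ,
      C₀ * ((2:ℝ) ^ (-((j:ℝ) * b)) * (j:ℝ) ^ q) * ((2:ℝ) ^ j) ^ N = ψ j := by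
    intro j
    have e1 : ((2:ℝ) ^ j) ^ N = (2:ℝ) ^ ((j:ℝ) * (N:ℝ)) := by
      rw [← pow_mul, ← Real.rpow_natCast (2:ℝ) (j * N)]
      push_cast
      ring_nf
    have e2 : (2:ℝ) ^ (-((j:ℝ) * b)) * (2:ℝ) ^ ((j:ℝ) * (N:ℝ))
        = (2:ℝ) ^ ((j:ℝ) * ((N:ℝ) - b)) := by
      rw [← Real.rpow_add two_pos]; congr 1; ring
    calc C₀ * ((2:ℝ) ^ (-((j:ℝ) * b)) * (j:ℝ) ^ q) * ((2:ℝ) ^ j) ^ N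
        = C₀ * (((2:ℝ) ^ (-((j:ℝ) * b)) * ((2:ℝ) ^ j) ^ N) * (j:ℝ) ^ q) := by ring
      _ = C₀ * (((2:ℝ) ^ (-((j:ℝ) * b)) * (2:ℝ) ^ ((j:ℝ) * (N:ℝ))) * (j:ℝ) ^ q) := by
          rw [e1]
      _ = ψ j := by rw [e2]
  -- per-annulus integral bound
  have hterm : ∀ k : ℕ,
      ENNReal.ofReal (ψ (k₀ + k)) * V
        ≤ ∫⁻ y in S k, ENNReal.ofReal (Kab α β (x - y) * f y) := by
    intro k
    have hDn : (0:ℝ) ≤ C₀ * ((2:ℝ) ^ (-(((k₀ + k : ℕ):ℝ) * b)) * ((k₀ + k : ℕ):ℝ) ^ q) := by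
      have := Real.rpow_nonneg (by positivity : (0:ℝ) ≤ (2:ℝ)) (-(((k₀ + k : ℕ):ℝ) * b))
      have := Real.rpow_nonneg (Nat.cast_nonneg (k₀ + k)) q
      positivity
    calc ENNReal.ofReal (ψ (k₀ + k)) * V
        = ENNReal.ofReal (C₀ * ((2:ℝ) ^ (-(((k₀ + k : ℕ):ℝ) * b)) * ((k₀ + k : ℕ):ℝ) ^ q) *
            ((2:ℝ) ^ (k₀ + k)) ^ N) * V := by rw [hψeq (k₀ + k)]
      _ = ENNReal.ofReal (C₀ * ((2:ℝ) ^ (-(((k₀ + k : ℕ):ℝ) * b)) * ((k₀ + k : ℕ):ℝ) ^ q)) *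
            (ENNReal.ofReal (((2:ℝ) ^ (k₀ + k)) ^ N) * V) := by
          rw [ENNReal.ofReal_mul hDn, mul_assoc]
      _ ≤ ENNReal.ofReal (C₀ * ((2:ℝ) ^ (-(((k₀ + k : ℕ):ℝ) * b)) * ((k₀ + k : ℕ):ℝ) ^ q)) *
            volume (S k) := mul_le_mul_right (hvol k) _
      _ = ∫⁻ _ in S k, ENNReal.ofReal
            (C₀ * ((2:ℝ) ^ (-(((k₀ + k : ℕ):ℝ) * b)) * ((k₀ + k : ℕ):ℝ) ^ q)) :=
          (setLIntegral_const _ _).symm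
      _ ≤ ∫⁻ y in S k, ENNReal.ofReal (Kab α β (x - y) * f y) :=
          setLIntegral_mono_ae' (hSm k)
            (Filter.Eventually.of_forall fun y hy =>
              ENNReal.ofReal_le_ofReal (hpoint k y hy))
  -- total lower bound
  have hsum : ∑' k : ℕ, ENNReal.ofReal (ψ (k₀ + k)) * V ≤ convKL α β f x := by
    calc ∑' k : ℕ, ENNReal.ofReal (ψ (k₀ + k)) * V
        ≤ ∑' k : ℕ, ∫⁻ y in S k, ENNReal.ofReal (Kab α β (x - y) * f y) :=
          ENNReal.tsum_le_tsum hterm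
      _ = ∫⁻ y in ⋃ k, S k, ENNReal.ofReal (Kab α β (x - y) * f y) :=
          (lintegral_iUnion hSm hSd _).symm
      _ ≤ ∫⁻ y, ENNReal.ofReal (Kab α β (x - y) * f y) := setLIntegral_le_lintegral _ _
      _ = convKL α β f x := rfl
  -- divergence of the model sum
  have hδcases : 0 < (N:ℝ) - b ∨ ((N:ℝ) - b = 0 ∧ -1 ≤ q) := by
    rcases hcase with h | ⟨h1, h2⟩
    · left; rw [hbdef]; linarith
    · right; constructor
      · rw [hbdef]; linarith
      · rw [hqdef]; linarith
  have htop : (⊤ : ℝ≥0∞) ≤ ∑' k : ℕ, ENNReal.ofReal (ψ (k₀ + k)) * V := by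
    rcases hδcases with hδ | ⟨hδ0, hq1⟩
    · -- supercritical case
      have hshift : Filter.Tendsto (fun k : ℕ => k₀ + k) Filter.atTop Filter.atTop :=
        (Filter.tendsto_add_atTop_nat k₀).congr fun n => Nat.add_comm n k₀
      have htend : Filter.Tendsto (fun k : ℕ => ψ (k₀ + k)) Filter.atTop Filter.atTop :=
        (tendsto_case1 C₀ ((N:ℝ) - b) q hC₀0 hδ).comp hshift
      obtain ⟨K, hK⟩ := Filter.eventually_atTop.1 (htend.eventually_ge_atTop 1)
      haveI : Infinite ↥(Set.Ici K) := (Set.Ici_infinite K).to_subtype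
      calc (⊤ : ℝ≥0∞) = ∑' _ : ↥(Set.Ici K), V :=
            (ENNReal.tsum_const_eq_top_of_ne_zero hV0.ne').symm
        _ = ∑' k : ℕ, Set.indicator (Set.Ici K) (fun _ => V) k :=
            tsum_subtype (Set.Ici K) fun _ => V
        _ ≤ ∑' k : ℕ, ENNReal.ofReal (ψ (k₀ + k)) * V := by
            apply ENNReal.tsum_le_tsum
            intro k
            by_cases hk : k ∈ Set.Ici K
            · rw [Set.indicator_of_mem hk]
              calc V = 1 * V := (one_mul V).symm
                _ ≤ ENNReal.ofReal (ψ (k₀ + k)) * V :=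
                  mul_le_mul_left (ENNReal.one_le_ofReal.2 (hK k hk)) V
            · rw [Set.indicator_of_notMem hk]
              exact zero_le
    · -- critical case
      have hψlow : ∀ k : ℕ, C₀ * (((k₀ + k : ℕ):ℝ))⁻¹ ≤ ψ (k₀ + k) := by
        intro k
        have hj1 : (1:ℝ) ≤ ((k₀ + k : ℕ):ℝ) := by
          exact_mod_cast le_trans hk₀1 (Nat.le_add_right k₀ k)
        have h1 : ((k₀ + k : ℕ):ℝ) ^ (-1:ℝ) ≤ ((k₀ + k : ℕ):ℝ) ^ q :=
          Real.rpow_le_rpow_of_exponent_le hj1 hq1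
        rw [Real.rpow_neg_one] at h1
        have h2 : (2:ℝ) ^ ((((k₀ + k : ℕ)):ℝ) * ((N:ℝ) - b)) = 1 := by
          rw [hδ0, mul_zero, Real.rpow_zero]
        calc C₀ * (((k₀ + k : ℕ):ℝ))⁻¹ ≤ C₀ * ((k₀ + k : ℕ):ℝ) ^ q :=
              mul_le_mul_of_nonneg_left h1 hC₀0.le
          _ = ψ (k₀ + k) := by rw [hψdef]; dsimp only; rw [h2]; ring
      calc (⊤ : ℝ≥0∞)
          = (∑' k : ℕ, ENNReal.ofReal (C₀ * (((k₀ + k : ℕ):ℝ))⁻¹)) * V := by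
            rw [tsum_harmonic_top C₀ hC₀0 k₀, ENNReal.top_mul hV0.ne']
        _ = ∑' k : ℕ, ENNReal.ofReal (C₀ * (((k₀ + k : ℕ):ℝ))⁻¹) * V :=
            ENNReal.tsum_mul_right.symm
        _ ≤ ∑' k : ℕ, ENNReal.ofReal (ψ (k₀ + k)) * V :=
            ENNReal.tsum_le_tsum fun k =>
              mul_le_mul_left (ENNReal.ofReal_le_ofReal (hψlow k)) V
  exact top_le_iff.1 (htop.trans hsum)
end

section
/- Let K_{α,β}(x) = |x|^{-α} log^{β}(1+|x|) with 0 ≤ α ≤ N, β > α − N, and let f ≥ 0 satisfy f(x) ≥ c|x|^{-σ} log^{κ}(1+|x|) for |x| ≥ 1, with σ > N − α. Then there exists C > 0 such that (K_{α,β} * f)(x) ≥ C|x|^{N−α−σ} log^{β+κ}(1+|x|) for all |x| ≥ 1. -/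
open MeasureTheory Real
open scoped ENNReal

/-- Key comparison: if `L/3 ≤ a ≤ 3L` then `a^t ≥ 3^{-|t|} L^t`. -/
lemma log_rpow_bound {a L t : ℝ} (hL : 0 < L) (h1 : L / 3 ≤ a) (h2 : a ≤ 3 * L) :
    (3 : ℝ) ^ (-|t|) * L ^ t ≤ a ^ t := by
  have ha : 0 < a := lt_of_lt_of_le (by linarith) h1
  rcases le_or_gt 0 t with ht | ht
  · rw [abs_of_nonneg ht]
    calc (3 : ℝ) ^ (-t) * L ^ t = (L / 3) ^ t := by
          rw [Real.div_rpow hL.le (by norm_num), Real.rpow_neg (by norm_num)]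
          ring
      _ ≤ a ^ t := Real.rpow_le_rpow (by positivity) h1 ht
  · rw [abs_of_neg ht, neg_neg]
    calc (3 : ℝ) ^ t * L ^ t = (3 * L) ^ t := (Real.mul_rpow (by norm_num) hL.le).symm
      _ ≤ a ^ t := Real.rpow_le_rpow_of_nonpos ha h2 ht.le

set_option maxHeartbeats 2000000 in
theorem stmt5 (N : ℕ) (hN : 1 ≤ N) (α β σ κ c : ℝ) (hα0 : 0 ≤ α) (hαN : α ≤ N)
    (hβ : α - N < β) (hσ : (N : ℝ) - α < σ) (hc : 0 < c)
    (f : EuclideanSpace ℝ (Fin N) → ℝ)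
    (hf : LocallyIntegrable f volume) (hf0 : ∀ x, 0 ≤ f x)
    (hlow : ∀ x : EuclideanSpace ℝ (Fin N), 1 ≤ ‖x‖ →
      c * (‖x‖ ^ (-σ) * (Real.log (1 + ‖x‖)) ^ κ) ≤ f x) :
    ∃ C > 0, ∀ x : EuclideanSpace ℝ (Fin N), 1 ≤ ‖x‖ →
      ENNReal.ofReal (C * (‖x‖ ^ ((N : ℝ) - α - σ) * (Real.log (1 + ‖x‖)) ^ (β + κ))) ≤
        convKL α β f x := by
  have hσ0 : 0 < σ := lt_of_le_of_lt (by linarith) hσ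
  -- volume of unit ball
  set vB : ℝ≥0∞ := volume (Metric.ball (0 : EuclideanSpace ℝ (Fin N)) 1) with hvB
  have hvBpos : 0 < vB := Metric.measure_ball_pos _ _ one_pos
  have hvBfin : vB < ⊤ := measure_ball_lt_top
  set K0 : ℝ := vB.toReal with hK0
  have hK0pos : 0 < K0 := ENNReal.toReal_pos hvBpos.ne' hvBfin.ne
  set C : ℝ := c * (3 / 2 : ℝ) ^ (-α) * (3 : ℝ) ^ (-|β|) * (5 / 2 : ℝ) ^ (-σ) *
      (3 : ℝ) ^ (-|κ|) * (2 : ℝ) ^ (-(N : ℝ)) * K0 with hC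
  have hCpos : 0 < C := by
    have : (0:ℝ) < (3 / 2 : ℝ) ^ (-α) := Real.rpow_pos_of_pos (by norm_num) _
    positivity
  refine ⟨C, hCpos, fun x hx => ?_⟩
  set R : ℝ := ‖x‖ with hR
  have hR1 : (1 : ℝ) ≤ R := hx
  have hRpos : (0 : ℝ) < R := by linarith
  set L : ℝ := Real.log (1 + R) with hL
  have hLpos : 0 < L := Real.log_pos (by linarith)
  set S : Set (EuclideanSpace ℝ (Fin N)) := Metric.ball ((2 : ℝ) • x) (R / 2) with hS
  -- pointwise lower bound on S
  have key : ∀ y ∈ S, ENNReal.ofReal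
      (((3/2:ℝ) ^ (-α) * R ^ (-α)) * ((3:ℝ) ^ (-|β|) * L ^ β) *
        (c * (((5/2:ℝ) ^ (-σ) * R ^ (-σ)) * ((3:ℝ) ^ (-|κ|) * L ^ κ))))
      ≤ ENNReal.ofReal (Kab α β (x - y) * f y) := by
    intro y hy
    apply ENNReal.ofReal_le_ofReal
    have hd : ‖y - (2:ℝ) • x‖ ≤ R / 2 := by
      have := mem_ball_iff_norm.mp hy
      linarith
    have h2x : ‖(2:ℝ) • x‖ = 2 * R := by
      rw [norm_smul]; simp [hR, abs_of_nonneg]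
    have hxy1 : R / 2 ≤ ‖x - y‖ := by
      have e : x - y = -x - (y - (2:ℝ) • x) := by module
      have := norm_sub_norm_le (-x) (y - (2:ℝ) • x)
      rw [← e] at this
      simp only [norm_neg] at this
      linarith
    have hxy2 : ‖x - y‖ ≤ 3 / 2 * R := by
      have e : x - y = -x - (y - (2:ℝ) • x) := by module
      calc ‖x - y‖ = ‖-x - (y - (2:ℝ) • x)‖ := by rw [e]
        _ ≤ ‖-x‖ + ‖y - (2:ℝ) • x‖ := norm_sub_le _ _
        _ ≤ R + R / 2 := by simp only [norm_neg]; linarith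
        _ = 3 / 2 * R := by ring
    have hy1 : 3 / 2 * R ≤ ‖y‖ := by
      have e : y = (2:ℝ) • x + (y - (2:ℝ) • x) := by module
      have := norm_sub_norm_le ((2:ℝ) • x) (-(y - (2:ℝ) • x))
      have e2 : (2:ℝ) • x - -(y - (2:ℝ) • x) = y := by module
      rw [e2, norm_neg, h2x] at this
      linarith
    have hy2 : ‖y‖ ≤ 5 / 2 * R := by
      have e : y = (2:ℝ) • x + (y - (2:ℝ) • x) := by module
      calc ‖y‖ = ‖(2:ℝ) • x + (y - (2:ℝ) • x)‖ := by rw [← e]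
        _ ≤ ‖(2:ℝ) • x‖ + ‖y - (2:ℝ) • x‖ := norm_add_le _ _
        _ ≤ 2 * R + R / 2 := by rw [h2x]; linarith
        _ = 5 / 2 * R := by ring
    have hxypos : (0:ℝ) < ‖x - y‖ := by linarith
    have hypos : (0:ℝ) < ‖y‖ := by linarith
    -- factor bounds
    have hA : (3/2:ℝ) ^ (-α) * R ^ (-α) ≤ ‖x - y‖ ^ (-α) := by
      calc (3/2:ℝ) ^ (-α) * R ^ (-α) = (3/2 * R) ^ (-α) :=
            (Real.mul_rpow (by norm_num) hRpos.le).symm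
        _ ≤ ‖x - y‖ ^ (-α) :=
            Real.rpow_le_rpow_of_nonpos hxypos hxy2 (by linarith)
    have hB : (3:ℝ) ^ (-|β|) * L ^ β ≤ (Real.log (1 + ‖x - y‖)) ^ β := by
      apply log_rpow_bound hLpos
      · -- L/3 ≤ log(1+‖x-y‖) : since log(1+R/2) ≥ L/2 ≥ L/3
        have h1 : Real.log (1 + R / 2) ≤ Real.log (1 + ‖x - y‖) :=
          Real.log_le_log (by linarith) (by linarith)
        have h2 : L ≤ 2 * Real.log (1 + R / 2) := by
          have : Real.log (1 + R) ≤ Real.log ((1 + R / 2) ^ 2) :=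
            Real.log_le_log (by linarith) (by nlinarith)
          rwa [Real.log_pow, Nat.cast_ofNat, ← hL] at this
        linarith
      · have h1 : Real.log (1 + ‖x - y‖) ≤ Real.log ((1 + R) ^ 2) :=
          Real.log_le_log (by linarith) (by nlinarith)
        rw [Real.log_pow, Nat.cast_ofNat] at h1
        linarith
    have hCσ : (5/2:ℝ) ^ (-σ) * R ^ (-σ) ≤ ‖y‖ ^ (-σ) := by
      calc (5/2:ℝ) ^ (-σ) * R ^ (-σ) = (5/2 * R) ^ (-σ) :=
            (Real.mul_rpow (by norm_num) hRpos.le).symm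
        _ ≤ ‖y‖ ^ (-σ) := Real.rpow_le_rpow_of_nonpos hypos hy2 (by linarith)
    have hD : (3:ℝ) ^ (-|κ|) * L ^ κ ≤ (Real.log (1 + ‖y‖)) ^ κ := by
      apply log_rpow_bound hLpos
      · have h1 : Real.log (1 + R) ≤ Real.log (1 + ‖y‖) :=
          Real.log_le_log (by linarith) (by linarith)
        linarith
      · have hexp : (1 + R) ^ 3 = 1 + 3*R + 3*R^2 + R^3 := by ring
        have h1 : Real.log (1 + ‖y‖) ≤ Real.log ((1 + R) ^ 3) :=
          Real.log_le_log (by linarith)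
            (by nlinarith [sq_nonneg R, pow_nonneg hRpos.le 3])
        rw [Real.log_pow] at h1
        push_cast at h1
        linarith
    have hfy : c * (‖y‖ ^ (-σ) * (Real.log (1 + ‖y‖)) ^ κ) ≤ f y :=
      hlow y (by linarith)
    have hlog1 : (0:ℝ) < Real.log (1 + ‖x - y‖) := Real.log_pos (by linarith)
    have hApos : (0:ℝ) < (3/2:ℝ) ^ (-α) * R ^ (-α) := by positivity
    have hBpos : (0:ℝ) < (3:ℝ) ^ (-|β|) * L ^ β := by positivity
    have hCpos' : (0:ℝ) < (5/2:ℝ) ^ (-σ) * R ^ (-σ) := by positivity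
    have hDpos : (0:ℝ) < (3:ℝ) ^ (-|κ|) * L ^ κ := by positivity
    calc ((3/2:ℝ) ^ (-α) * R ^ (-α)) * ((3:ℝ) ^ (-|β|) * L ^ β) *
          (c * (((5/2:ℝ) ^ (-σ) * R ^ (-σ)) * ((3:ℝ) ^ (-|κ|) * L ^ κ)))
        ≤ (‖x - y‖ ^ (-α)) * ((Real.log (1 + ‖x - y‖)) ^ β) *
          (c * ((‖y‖ ^ (-σ)) * ((Real.log (1 + ‖y‖)) ^ κ))) := by
          apply mul_le_mul (mul_le_mul hA hB hBpos.le (by positivity))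
            (by
              apply mul_le_mul_of_nonneg_left _ hc.le
              exact mul_le_mul hCσ hD hDpos.le (by positivity))
            (mul_nonneg hc.le (by positivity))
            (mul_nonneg (Real.rpow_nonneg (norm_nonneg _) _)
              (Real.rpow_nonneg hlog1.le _))
      _ ≤ Kab α β (x - y) * f y := by
          apply mul_le_mul_of_nonneg_left hfy
          exact mul_nonneg (Real.rpow_nonneg (norm_nonneg _) _)
            (Real.rpow_nonneg hlog1.le _)
  -- volume of S
  have hfinrank : Module.finrank ℝ (EuclideanSpace ℝ (Fin N)) = N := finrank_euclideanSpace_fin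
  have hvolS : volume S = ENNReal.ofReal ((R / 2) ^ N) * vB := by
    rw [hS, Measure.addHaar_ball_of_pos volume _ (by linarith : (0:ℝ) < R / 2), hfinrank]
  -- put things together
  calc ENNReal.ofReal (C * (R ^ ((N : ℝ) - α - σ) * L ^ (β + κ)))
      = ENNReal.ofReal
        ((((3/2:ℝ) ^ (-α) * R ^ (-α)) * ((3:ℝ) ^ (-|β|) * L ^ β) *
          (c * (((5/2:ℝ) ^ (-σ) * R ^ (-σ)) * ((3:ℝ) ^ (-|κ|) * L ^ κ)))) *
          ((R / 2) ^ N * K0)) := by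
        congr 1
        rw [hC]
        have e1 : R ^ ((N : ℝ) - α - σ) = R ^ (N : ℝ) * R ^ (-α) * R ^ (-σ) := by
          rw [← Real.rpow_add hRpos, ← Real.rpow_add hRpos]; ring_nf
        have e2 : L ^ (β + κ) = L ^ β * L ^ κ := Real.rpow_add hLpos _ _
        have e3 : (R / 2 : ℝ) ^ N = R ^ (N : ℝ) * (2:ℝ) ^ (-(N:ℝ)) := by
          rw [Real.rpow_natCast, Real.rpow_neg (by norm_num), Real.rpow_natCast,
            div_pow, div_eq_mul_inv]
        rw [e1, e2, e3]; ring
      _ = ENNReal.ofReal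
          (((3/2:ℝ) ^ (-α) * R ^ (-α)) * ((3:ℝ) ^ (-|β|) * L ^ β) *
            (c * (((5/2:ℝ) ^ (-σ) * R ^ (-σ)) * ((3:ℝ) ^ (-|κ|) * L ^ κ)))) *
          (ENNReal.ofReal ((R / 2) ^ N) * vB) := by
        have hPnn : (0:ℝ) ≤ ((3/2:ℝ) ^ (-α) * R ^ (-α)) * ((3:ℝ) ^ (-|β|) * L ^ β) *
            (c * (((5/2:ℝ) ^ (-σ) * R ^ (-σ)) * ((3:ℝ) ^ (-|κ|) * L ^ κ))) :=
          mul_nonneg (by positivity) (mul_nonneg hc.le (by positivity))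
        rw [ENNReal.ofReal_mul hPnn,
          ENNReal.ofReal_mul (pow_nonneg (by linarith : (0:ℝ) ≤ R / 2) N),
          hK0, ENNReal.ofReal_toReal hvBfin.ne, mul_assoc]
      _ = ∫⁻ _ in S, ENNReal.ofReal
          (((3/2:ℝ) ^ (-α) * R ^ (-α)) * ((3:ℝ) ^ (-|β|) * L ^ β) *
            (c * (((5/2:ℝ) ^ (-σ) * R ^ (-σ)) * ((3:ℝ) ^ (-|κ|) * L ^ κ)))) := by
        rw [setLIntegral_const, hvolS]
      _ ≤ ∫⁻ y in S, ENNReal.ofReal (Kab α β (x - y) * f y) :=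
        setLIntegral_mono' measurableSet_ball key
      _ ≤ convKL α β f x := setLIntegral_le_lintegral _ _
end

section
/- Let 0 ≤ α < N, β > α − N, A > 1, κ ∈ ℝ, σ > N. If 0 ≤ f(x) ≤ c(A+|x|)^{-σ} log^{κ}(A+|x|) on ℝᴺ, then there exists C > 0 such that (K_{α,β} * f)(x) ≤ C (A+|x|)^{-α} log^{β}(A+|x|) for all x ∈ ℝᴺ. -/
open MeasureTheory Real
open scoped ENNReal

lemma aux_log_rpow_le {a : ℝ} (ha : 1 < a) (κ : ℝ) {ε : ℝ} (hε : 0 < ε) :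
    ∃ c : ℝ, 0 < c ∧ ∀ t : ℝ, a ≤ t → Real.log t ^ κ ≤ c * t ^ ε := by
  rcases le_or_gt κ 0 with hκ | hκ
  · refine ⟨Real.log a ^ κ, Real.rpow_pos_of_pos (Real.log_pos ha) _, fun t ht => ?_⟩
    have h1 : (0:ℝ) < Real.log a := Real.log_pos ha
    have h2 : Real.log a ≤ Real.log t := Real.log_le_log (by linarith) ht
    have h3 : Real.log t ^ κ ≤ Real.log a ^ κ := Real.rpow_le_rpow_of_nonpos h1 h2 hκ
    have h4 : (1:ℝ) ≤ t ^ ε := Real.one_le_rpow (by linarith) hε.le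
    nlinarith [Real.rpow_pos_of_pos h1 κ]
  · refine ⟨(κ/ε) ^ κ, Real.rpow_pos_of_pos (by positivity) _, fun t ht => ?_⟩
    have h0 : (0:ℝ) < t := by linarith
    have h1 : Real.log t ≤ t ^ (ε/κ) / (ε/κ) := Real.log_le_rpow_div h0.le (by positivity)
    have h2 : 0 ≤ Real.log t := Real.log_nonneg (by linarith)
    have heq : t ^ (ε/κ) / (ε/κ) = t ^ (ε/κ) * (κ/ε) := by
      rw [div_eq_mul_inv, inv_div]
    have h3 : Real.log t ^ κ ≤ (t ^ (ε/κ) * (κ/ε)) ^ κ := by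
      apply Real.rpow_le_rpow h2 (by rw [← heq]; exact h1) hκ.le
    rw [Real.mul_rpow (Real.rpow_nonneg h0.le _) (by positivity),
      ← Real.rpow_mul h0.le, div_mul_cancel₀ _ hκ.ne'] at h3
    linarith [h3]
open scoped ENNReal

lemma aux_two_rpow (a b : ℝ) : ((2:ℝ) ^ a) ^ b = (2:ℝ) ^ (a * b) :=
  (Real.rpow_mul (by norm_num) a b).symm

lemma aux_ball {N : ℕ} (hN : 1 ≤ N) {γ : ℝ} (hγ0 : 0 ≤ γ) (hγN : γ < N) :
    ∃ cJ : ℝ, 0 < cJ ∧ ∀ S : ℝ, 0 < S →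
      ∫⁻ z in Metric.closedBall (0 : EuclideanSpace ℝ (Fin N)) S, ENNReal.ofReal (‖z‖ ^ (-γ)) ≤
        ENNReal.ofReal (cJ * S ^ ((N:ℝ) - γ)) := by
  classical
  haveI : Nontrivial (EuclideanSpace ℝ (Fin N)) := by
    refine ⟨⟨EuclideanSpace.single ⟨0, hN⟩ 1, 0, fun h => ?_⟩⟩
    have := congrArg (fun v : EuclideanSpace ℝ (Fin N) => v ⟨0, hN⟩) h
    simp [EuclideanSpace.single_apply] at this
  set t : ℝ := (N:ℝ) - γ with ht_def
  have ht : 0 < t := by simp only [ht_def]; linarith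
  set q : ℝ := (2:ℝ) ^ (-t) with hq_def
  have hq0 : 0 < q := Real.rpow_pos_of_pos two_pos _
  have hq1 : q < 1 := Real.rpow_lt_one_of_one_lt_of_neg one_lt_two (by linarith)
  set mB := (volume (Metric.ball (0 : EuclideanSpace ℝ (Fin N)) 1)) with hmB_def
  have hmB : mB < ⊤ := measure_ball_lt_top
  have hq1' : ENNReal.ofReal q < 1 := by rwa [ENNReal.ofReal_lt_one]
  set E2 : ℝ≥0∞ := mB * (1 - ENNReal.ofReal q)⁻¹ with hE2_def
  have hE2 : E2 < ⊤ := by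
    apply ENNReal.mul_lt_top hmB
    rw [ENNReal.inv_lt_top, tsub_pos_iff_lt]
    exact hq1'
  refine ⟨(2:ℝ) ^ γ * E2.toReal + 1, by positivity, fun S hS => ?_⟩
  have key : ∀ k : ℕ,
      ∫⁻ z in Metric.closedBall (0 : EuclideanSpace ℝ (Fin N)) (S / 2 ^ k) \
        Metric.closedBall 0 (S / 2 ^ (k+1)), ENNReal.ofReal (‖z‖ ^ (-γ)) ≤
      ENNReal.ofReal (S ^ t * 2 ^ γ) * mB * (ENNReal.ofReal q) ^ k := by
    intro k
    set u : ℝ := S / 2 ^ (k+1) with hu_def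
    have hu : 0 < u := by positivity
    have step1 : ∫⁻ z in Metric.closedBall (0 : EuclideanSpace ℝ (Fin N)) (S / 2 ^ k) \
        Metric.closedBall 0 u, ENNReal.ofReal (‖z‖ ^ (-γ)) ≤
        ENNReal.ofReal (u ^ (-γ)) *
          volume (Metric.closedBall (0 : EuclideanSpace ℝ (Fin N)) (S / 2 ^ k)) := by
      calc ∫⁻ z in Metric.closedBall (0 : EuclideanSpace ℝ (Fin N)) (S / 2 ^ k) \
            Metric.closedBall 0 u, ENNReal.ofReal (‖z‖ ^ (-γ))
          ≤ ∫⁻ _ in Metric.closedBall (0 : EuclideanSpace ℝ (Fin N)) (S / 2 ^ k) \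
            Metric.closedBall 0 u, ENNReal.ofReal (u ^ (-γ)) := by
            apply setLIntegral_mono' ((measurableSet_closedBall).diff measurableSet_closedBall)
            intro z hz
            apply ENNReal.ofReal_le_ofReal
            have hz2 : u < ‖z‖ := by
              have := hz.2
              simpa [Metric.mem_closedBall, dist_zero_right, not_le] using this
            exact Real.rpow_le_rpow_of_nonpos hu hz2.le (by linarith)
        _ = ENNReal.ofReal (u ^ (-γ)) *
            volume (Metric.closedBall (0 : EuclideanSpace ℝ (Fin N)) (S / 2 ^ k) \
              Metric.closedBall 0 u) := setLIntegral_const _ _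
        _ ≤ _ := by
            gcongr
            exact Set.diff_subset
    have hvol : volume (Metric.closedBall (0 : EuclideanSpace ℝ (Fin N)) (S / 2 ^ k)) =
        ENNReal.ofReal ((S / 2 ^ k) ^ N) * mB := by
      rw [hmB_def, Measure.addHaar_closedBall (volume : Measure (EuclideanSpace ℝ (Fin N))) 0
        (by positivity : (0:ℝ) ≤ S / 2 ^ k)]
      simp [finrank_euclideanSpace_fin]
    have e0 : u = S * (2:ℝ) ^ (-((k:ℝ)+1)) := by
      rw [hu_def, Real.rpow_neg (by norm_num), div_eq_mul_inv]
      congr 2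
      rw [← Real.rpow_natCast (2:ℝ) (k+1)]
      push_cast
      ring_nf
    have e0' : S / 2 ^ k = S * (2:ℝ) ^ (-(k:ℝ)) := by
      rw [Real.rpow_neg (by norm_num), div_eq_mul_inv]
      congr 2
      rw [← Real.rpow_natCast (2:ℝ) k]
    have hreal : u ^ (-γ) * (S / 2 ^ k) ^ N = S ^ t * 2 ^ γ * q ^ k := by
      have h2p : (0:ℝ) ≤ (2:ℝ) ^ (-((k:ℝ)+1)) := (Real.rpow_pos_of_pos two_pos _).le
      have h2p' : (0:ℝ) ≤ (2:ℝ) ^ (-(k:ℝ)) := (Real.rpow_pos_of_pos two_pos _).le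
      rw [e0, e0', ← Real.rpow_natCast (S * (2:ℝ) ^ (-(k:ℝ))) N,
        Real.mul_rpow hS.le h2p, Real.mul_rpow hS.le h2p',
        aux_two_rpow, aux_two_rpow, hq_def, ← Real.rpow_natCast ((2:ℝ) ^ (-t)) k,
        aux_two_rpow]
      rw [show S ^ (-γ) * ((2:ℝ)^(-((k:ℝ)+1)*(-γ))) * (S ^ ((N:ℝ)) * (2:ℝ)^(-(k:ℝ)*(N:ℝ)))
          = (S ^ (-γ) * S ^ ((N:ℝ))) * ((2:ℝ)^(-((k:ℝ)+1)*(-γ)) * (2:ℝ)^(-(k:ℝ)*(N:ℝ))) by ring,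
        ← Real.rpow_add hS, ← Real.rpow_add two_pos,
        show S ^ t * 2 ^ γ * (2:ℝ) ^ (-t * (k:ℝ)) = S ^ t * ((2:ℝ) ^ γ * (2:ℝ) ^ (-t * (k:ℝ))) by ring,
        ← Real.rpow_add two_pos]
      congr 1
      · congr 1
        rw [ht_def]; ring
      · congr 1
        rw [ht_def]; ring
    calc ∫⁻ z in Metric.closedBall (0 : EuclideanSpace ℝ (Fin N)) (S / 2 ^ k) \
          Metric.closedBall 0 (S / 2 ^ (k+1)), ENNReal.ofReal (‖z‖ ^ (-γ))
        ≤ ENNReal.ofReal (u ^ (-γ)) *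
          volume (Metric.closedBall (0 : EuclideanSpace ℝ (Fin N)) (S / 2 ^ k)) := step1
      _ = ENNReal.ofReal (u ^ (-γ)) * (ENNReal.ofReal ((S / 2 ^ k) ^ N) * mB) := by rw [hvol]
      _ = ENNReal.ofReal (u ^ (-γ) * (S / 2 ^ k) ^ N) * mB := by
          rw [ENNReal.ofReal_mul (Real.rpow_nonneg hu.le _), mul_assoc]
      _ = ENNReal.ofReal (S ^ t * 2 ^ γ * q ^ k) * mB := by rw [hreal]
      _ = ENNReal.ofReal (S ^ t * 2 ^ γ) * mB * (ENNReal.ofReal q) ^ k := by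
          rw [ENNReal.ofReal_mul (by positivity), ENNReal.ofReal_pow hq0.le]
          ring
  have cover : Metric.closedBall (0 : EuclideanSpace ℝ (Fin N)) S ⊆
      {0} ∪ ⋃ k : ℕ, (Metric.closedBall (0 : EuclideanSpace ℝ (Fin N)) (S / 2 ^ k) \
        Metric.closedBall 0 (S / 2 ^ (k+1))) := by
    intro z hz
    by_cases hz0 : z = 0
    · exact Or.inl (by simp [hz0])
    right
    have hzn : 0 < ‖z‖ := norm_pos_iff.2 hz0
    have hex : ∃ n : ℕ, S / 2 ^ (n+1) < ‖z‖ := by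
      obtain ⟨n, hn⟩ := pow_unbounded_of_one_lt (S / ‖z‖) (one_lt_two (α := ℝ))
      refine ⟨n, ?_⟩
      rw [div_lt_iff₀ hzn] at hn
      rw [div_lt_iff₀ (by positivity)]
      have h2 : (0:ℝ) < 2 ^ n := by positivity
      calc S < 2 ^ n * ‖z‖ := hn
        _ ≤ ‖z‖ * 2 ^ (n+1) := by rw [pow_succ]; nlinarith
    set k := Nat.find hex with hk_def
    refine Set.mem_iUnion.2 ⟨k, ?_, ?_⟩
    · rw [Metric.mem_closedBall, dist_zero_right]
      rcases Nat.eq_zero_or_pos k with hk0 | hkpos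
      · rw [hk0]
        simpa [Metric.mem_closedBall, dist_zero_right] using hz
      · obtain ⟨m, hm⟩ := Nat.exists_eq_succ_of_ne_zero hkpos.ne'
        have := Nat.find_min hex (m := m) (by omega)
        rw [hm]
        push_neg at this
        exact this
    · rw [Metric.mem_closedBall, dist_zero_right, not_le]
      exact Nat.find_spec hex
  calc ∫⁻ z in Metric.closedBall (0 : EuclideanSpace ℝ (Fin N)) S, ENNReal.ofReal (‖z‖ ^ (-γ))
      ≤ ∫⁻ z in ({0} ∪ ⋃ k : ℕ, (Metric.closedBall (0 : EuclideanSpace ℝ (Fin N)) (S / 2 ^ k) \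
          Metric.closedBall 0 (S / 2 ^ (k+1)))), ENNReal.ofReal (‖z‖ ^ (-γ)) :=
        lintegral_mono_set cover
    _ ≤ (∫⁻ z in ({0} : Set (EuclideanSpace ℝ (Fin N))), ENNReal.ofReal (‖z‖ ^ (-γ))) +
        ∫⁻ z in (⋃ k : ℕ, (Metric.closedBall (0 : EuclideanSpace ℝ (Fin N)) (S / 2 ^ k) \
          Metric.closedBall 0 (S / 2 ^ (k+1)))), ENNReal.ofReal (‖z‖ ^ (-γ)) :=
        lintegral_union_le _ _ _
    _ ≤ 0 + ∑' k : ℕ, ∫⁻ z in (Metric.closedBall (0 : EuclideanSpace ℝ (Fin N)) (S / 2 ^ k) \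
          Metric.closedBall 0 (S / 2 ^ (k+1))), ENNReal.ofReal (‖z‖ ^ (-γ)) := by
        gcongr
        · exact le_of_eq (setLIntegral_measure_zero _ _ (measure_singleton 0))
        · exact lintegral_iUnion_le _ _
    _ ≤ 0 + ∑' k : ℕ, ENNReal.ofReal (S ^ t * 2 ^ γ) * mB * (ENNReal.ofReal q) ^ k := by
        gcongr with k
        exact key k
    _ = ENNReal.ofReal (S ^ t * 2 ^ γ) * mB * (1 - ENNReal.ofReal q)⁻¹ := by
        rw [zero_add, ENNReal.tsum_mul_left, ENNReal.tsum_geometric]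
    _ = ENNReal.ofReal (S ^ t * 2 ^ γ * E2.toReal) := by
        rw [mul_assoc, ← hE2_def, ← ENNReal.ofReal_toReal hE2.ne,
          ← ENNReal.ofReal_mul (by positivity), ENNReal.ofReal_toReal hE2.ne]
    _ ≤ ENNReal.ofReal (((2:ℝ) ^ γ * E2.toReal + 1) * S ^ t) := by
        apply ENNReal.ofReal_le_ofReal
        have h1 : (0:ℝ) < S ^ t := Real.rpow_pos_of_pos hS _
        have h2 : (0:ℝ) ≤ E2.toReal := ENNReal.toReal_nonneg
        have h3 : (0:ℝ) < (2:ℝ) ^ γ := Real.rpow_pos_of_pos two_pos _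
        nlinarith


lemma Kab_nonneg {N : ℕ} (α β : ℝ) (z : EuclideanSpace ℝ (Fin N)) : 0 ≤ Kab α β z := by
  unfold Kab
  have h1 : (0:ℝ) ≤ 1 + ‖z‖ := by positivity
  have h2 : 0 ≤ Real.log (1 + ‖z‖) := Real.log_nonneg (by linarith [norm_nonneg z])
  positivity

lemma Kab_measurable {N : ℕ} (α β : ℝ) : Measurable (fun z : EuclideanSpace ℝ (Fin N) => Kab α β z) := by
  unfold Kab
  measurability

lemma near_reduction {N : ℕ} (α β A σ' c₁ : ℝ) (hA : 1 < A) (hσ' : 0 < σ') (hc₁ : 0 < c₁)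
    (f : EuclideanSpace ℝ (Fin N) → ℝ) (hf0 : ∀ y, 0 ≤ f y)
    (hfb : ∀ y, f y ≤ c₁ * (A + ‖y‖) ^ (-σ')) (x : EuclideanSpace ℝ (Fin N)) :
    ∫⁻ y in {y : EuclideanSpace ℝ (Fin N) | ‖x - y‖ ≤ (A + ‖x‖)/2},
        ENNReal.ofReal (Kab α β (x - y) * f y) ≤
      ENNReal.ofReal (c₁ * ((A + ‖x‖)/2) ^ (-σ')) *
        ∫⁻ z in Metric.closedBall (0 : EuclideanSpace ℝ (Fin N)) ((A + ‖x‖)/2),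
          ENNReal.ofReal (Kab α β z) := by
  set R : ℝ := A + ‖x‖ with hR_def
  have hR1 : 1 < R := by have := norm_nonneg x; simp only [hR_def]; linarith
  have hR2 : 0 < R/2 := by linarith
  set s : Set (EuclideanSpace ℝ (Fin N)) := {y | ‖x - y‖ ≤ R/2} with hs_def
  have hs : MeasurableSet s :=
    (measurable_norm.comp (measurable_const.sub measurable_id)) measurableSet_Iic
  have hcR : 0 < c₁ * (R/2) ^ (-σ') := by positivity
  calc ∫⁻ y in s, ENNReal.ofReal (Kab α β (x - y) * f y)
      ≤ ∫⁻ y in s, ENNReal.ofReal ((c₁ * (R/2) ^ (-σ')) * Kab α β (x - y)) := by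
        apply setLIntegral_mono' hs
        intro y hy
        apply ENNReal.ofReal_le_ofReal
        have h1 : ‖x‖ - ‖y‖ ≤ ‖x - y‖ := norm_sub_norm_le x y
        have h2 : ‖x - y‖ ≤ R/2 := hy
        have h3 : R/2 ≤ A + ‖y‖ := by simp only [hR_def] at h2 ⊢; linarith
        have h4 : f y ≤ c₁ * (R/2) ^ (-σ') := by
          calc f y ≤ c₁ * (A + ‖y‖) ^ (-σ') := hfb y
            _ ≤ c₁ * (R/2) ^ (-σ') := by
                apply mul_le_mul_of_nonneg_left _ hc₁.le
                exact Real.rpow_le_rpow_of_nonpos hR2 h3 (by linarith)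
        calc Kab α β (x - y) * f y ≤ Kab α β (x - y) * (c₁ * (R/2) ^ (-σ')) :=
              mul_le_mul_of_nonneg_left h4 (Kab_nonneg α β _)
          _ = (c₁ * (R/2) ^ (-σ')) * Kab α β (x - y) := mul_comm _ _
    _ = ENNReal.ofReal (c₁ * (R/2) ^ (-σ')) * ∫⁻ y in s, ENNReal.ofReal (Kab α β (x - y)) := by
        simp_rw [ENNReal.ofReal_mul hcR.le]
        rw [lintegral_const_mul' _ _ ENNReal.ofReal_ne_top]
    _ = ENNReal.ofReal (c₁ * (R/2) ^ (-σ')) *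
        ∫⁻ z in Metric.closedBall (0 : EuclideanSpace ℝ (Fin N)) (R/2),
          ENNReal.ofReal (Kab α β z) := by
        congr 1
        rw [← lintegral_indicator hs, ← lintegral_indicator measurableSet_closedBall]
        have hfun : ∀ y, s.indicator (fun y => ENNReal.ofReal (Kab α β (x - y))) y =
            (Metric.closedBall (0 : EuclideanSpace ℝ (Fin N)) (R/2)).indicator
              (fun z => ENNReal.ofReal (Kab α β z)) (x - y) := by
          intro y
          by_cases h : ‖x - y‖ ≤ R/2
          · rw [Set.indicator_of_mem (show y ∈ s from h),
              Set.indicator_of_mem (by simpa [Metric.mem_closedBall, dist_zero_right] using h)]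
          · rw [Set.indicator_of_notMem (show y ∉ s from h),
              Set.indicator_of_notMem (by simpa [Metric.mem_closedBall, dist_zero_right] using h)]
        simp_rw [hfun]
        exact (Measure.measurePreserving_sub_left volume x).lintegral_comp
          (((Kab_measurable α β).ennreal_ofReal).indicator measurableSet_closedBall)

lemma half_rpow {R : ℝ} (hR : 0 ≤ R) (e : ℝ) : (R/2) ^ e = R ^ e * (2:ℝ) ^ (-e) := by
  rw [div_eq_mul_inv, Real.mul_rpow hR (by norm_num), Real.inv_rpow (by norm_num),
    ← Real.rpow_neg (by norm_num)]

lemma two_mul_rpow {R : ℝ} (hR : 0 ≤ R) (e : ℝ) : (2*R) ^ e = (2:ℝ) ^ e * R ^ e :=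
  Real.mul_rpow (by norm_num) hR

lemma inv_bound_flip {P Q cL : ℝ} (hP0 : 0 < P) (hQ0 : 0 < Q) (hcL : 0 < cL)
    (h : P⁻¹ ≤ cL * Q) : Q⁻¹ ≤ cL * P := by
  have h1 : (1:ℝ) ≤ cL * Q * P := by
    have := mul_le_mul_of_nonneg_right h hP0.le
    rwa [inv_mul_cancel₀ hP0.ne'] at this
  rw [inv_le_iff_one_le_mul₀ hQ0]
  nlinarith

lemma near_bound {N : ℕ} (hN : 1 ≤ N) (α β A σ' c₁ : ℝ) (hα0 : 0 ≤ α) (hαN : α < N)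
    (hβ : α - (N:ℝ) < β) (hA : 1 < A) (hσ' : (N:ℝ) < σ') (hc₁ : 0 < c₁)
    (f : EuclideanSpace ℝ (Fin N) → ℝ) (hf0 : ∀ y, 0 ≤ f y)
    (hfb : ∀ y, f y ≤ c₁ * (A + ‖y‖) ^ (-σ')) :
    ∃ Cn : ℝ, 0 < Cn ∧ ∀ x : EuclideanSpace ℝ (Fin N),
      ∫⁻ y in {y : EuclideanSpace ℝ (Fin N) | ‖x - y‖ ≤ (A + ‖x‖)/2},
          ENNReal.ofReal (Kab α β (x - y) * f y) ≤
        ENNReal.ofReal (Cn * ((A + ‖x‖) ^ (-α) * Real.log (A + ‖x‖) ^ β)) := by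
  have hσ'0 : (0:ℝ) < σ' := lt_of_le_of_lt (Nat.cast_nonneg N) hσ'
  have hNσ' : (N:ℝ) - σ' ≤ 0 := by linarith
  rcases le_or_gt 0 β with hβ0 | hβ0
  · -- case 0 ≤ β
    obtain ⟨cJ, hcJ, hcJ'⟩ := aux_ball hN hα0 hαN
    set cA : ℝ := 1 + Real.log 2 / Real.log A with hcA_def
    have hlogA : 0 < Real.log A := Real.log_pos hA
    have hlog2 : 0 < Real.log 2 := Real.log_pos one_lt_two
    have hcA : 0 < cA := by positivity
    refine ⟨c₁ * 2 ^ σ' * cA ^ β * cJ * 2 ^ (α - (N:ℝ)) * A ^ ((N:ℝ) - σ'),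
      by positivity, fun x => ?_⟩
    set R : ℝ := A + ‖x‖ with hR_def
    have hR1 : 1 < R := by have := norm_nonneg x; simp only [hR_def]; linarith
    have hR0 : (0:ℝ) < R := by linarith
    have hR2 : 0 < R/2 := by linarith
    have hAR : A ≤ R := by simp only [hR_def]; linarith [norm_nonneg x]
    have hlogR : 0 < Real.log R := Real.log_pos hR1
    -- kernel bound on the ball
    have hker : ∀ z : EuclideanSpace ℝ (Fin N), z ∈ Metric.closedBall (0:EuclideanSpace ℝ (Fin N)) (R/2) →
        Kab α β z ≤ (cA ^ β * Real.log R ^ β) * ‖z‖ ^ (-α) := by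
      intro z hz
      rw [Metric.mem_closedBall, dist_zero_right] at hz
      have h1 : (0:ℝ) < 1 + ‖z‖ := by positivity
      have h2 : 1 + ‖z‖ ≤ 2 * R := by linarith
      have h3 : Real.log (1 + ‖z‖) ≤ Real.log (2*R) := Real.log_le_log h1 h2
      have h4 : Real.log (2*R) = Real.log 2 + Real.log R := Real.log_mul (by norm_num) hR0.ne'
      have h5 : Real.log A ≤ Real.log R := Real.log_le_log (by linarith) hAR
      have h6 : Real.log (2*R) ≤ cA * Real.log R := by
        rw [h4, hcA_def]
        have : Real.log 2 ≤ Real.log 2 / Real.log A * Real.log R := by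
          rw [div_mul_eq_mul_div, le_div_iff₀ hlogA]
          nlinarith
        nlinarith
      have h7 : Real.log (1 + ‖z‖) ^ β ≤ (cA * Real.log R) ^ β := by
        apply Real.rpow_le_rpow (Real.log_nonneg (by linarith [norm_nonneg z])) _ hβ0
        linarith
      rw [Real.mul_rpow hcA.le hlogR.le] at h7
      unfold Kab
      calc ‖z‖ ^ (-α) * Real.log (1 + ‖z‖) ^ β ≤ ‖z‖ ^ (-α) * (cA ^ β * Real.log R ^ β) :=
            mul_le_mul_of_nonneg_left h7 (Real.rpow_nonneg (norm_nonneg z) _)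
        _ = (cA ^ β * Real.log R ^ β) * ‖z‖ ^ (-α) := mul_comm _ _
    have hball : ∫⁻ z in Metric.closedBall (0:EuclideanSpace ℝ (Fin N)) (R/2),
        ENNReal.ofReal (Kab α β z) ≤
        ENNReal.ofReal ((cA ^ β * Real.log R ^ β) * (cJ * (R/2) ^ ((N:ℝ) - α))) := by
      calc ∫⁻ z in Metric.closedBall (0:EuclideanSpace ℝ (Fin N)) (R/2), ENNReal.ofReal (Kab α β z)
          ≤ ∫⁻ z in Metric.closedBall (0:EuclideanSpace ℝ (Fin N)) (R/2),
            ENNReal.ofReal ((cA ^ β * Real.log R ^ β) * ‖z‖ ^ (-α)) := by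
            apply setLIntegral_mono' measurableSet_closedBall
            intro z hz
            exact ENNReal.ofReal_le_ofReal (hker z hz)
        _ = ENNReal.ofReal (cA ^ β * Real.log R ^ β) *
            ∫⁻ z in Metric.closedBall (0:EuclideanSpace ℝ (Fin N)) (R/2),
              ENNReal.ofReal (‖z‖ ^ (-α)) := by
            simp_rw [ENNReal.ofReal_mul (by positivity : (0:ℝ) ≤ cA ^ β * Real.log R ^ β)]
            rw [lintegral_const_mul' _ _ ENNReal.ofReal_ne_top]
        _ ≤ ENNReal.ofReal (cA ^ β * Real.log R ^ β) *
            ENNReal.ofReal (cJ * (R/2) ^ ((N:ℝ) - α)) := by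
            gcongr
            exact hcJ' (R/2) hR2
        _ = _ := by rw [← ENNReal.ofReal_mul (by positivity)]
    calc ∫⁻ y in {y : EuclideanSpace ℝ (Fin N) | ‖x - y‖ ≤ (A + ‖x‖)/2},
          ENNReal.ofReal (Kab α β (x - y) * f y)
        ≤ ENNReal.ofReal (c₁ * ((A + ‖x‖)/2) ^ (-σ')) *
          ∫⁻ z in Metric.closedBall (0 : EuclideanSpace ℝ (Fin N)) ((A + ‖x‖)/2),
            ENNReal.ofReal (Kab α β z) :=
          near_reduction α β A σ' c₁ hA hσ'0 hc₁ f hf0 hfb x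
      _ ≤ ENNReal.ofReal (c₁ * (R/2) ^ (-σ')) *
          ENNReal.ofReal ((cA ^ β * Real.log R ^ β) * (cJ * (R/2) ^ ((N:ℝ) - α))) := by
          gcongr
      _ = ENNReal.ofReal ((c₁ * (R/2) ^ (-σ')) *
          ((cA ^ β * Real.log R ^ β) * (cJ * (R/2) ^ ((N:ℝ) - α)))) := by
          rw [← ENNReal.ofReal_mul (by positivity)]
      _ ≤ ENNReal.ofReal ((c₁ * 2 ^ σ' * cA ^ β * cJ * 2 ^ (α - (N:ℝ)) * A ^ ((N:ℝ) - σ')) *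
          (R ^ (-α) * Real.log R ^ β)) := by
          apply ENNReal.ofReal_le_ofReal
          rw [half_rpow hR0.le, half_rpow hR0.le]
          have hcomb : R ^ (-σ') * R ^ ((N:ℝ) - α) = R ^ ((N:ℝ) - σ') * R ^ (-α) := by
            rw [← Real.rpow_add hR0, ← Real.rpow_add hR0]
            congr 1
            ring
          have hRA : R ^ ((N:ℝ) - σ') ≤ A ^ ((N:ℝ) - σ') :=
            Real.rpow_le_rpow_of_nonpos (by linarith) hAR hNσ'
          have e1 : c₁ * (R ^ (-σ') * 2 ^ (- -σ')) *
              (cA ^ β * Real.log R ^ β * (cJ * (R ^ ((N:ℝ) - α) * 2 ^ (-((N:ℝ) - α))))) =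
              (c₁ * 2 ^ σ' * cA ^ β * cJ * 2 ^ (α - (N:ℝ)) * Real.log R ^ β) *
                (R ^ (-σ') * R ^ ((N:ℝ) - α)) := by
            rw [neg_neg, show -((N:ℝ) - α) = α - (N:ℝ) by ring]
            ring
          rw [e1, hcomb]
          have hpos : (0:ℝ) ≤ c₁ * 2 ^ σ' * cA ^ β * cJ * 2 ^ (α - (N:ℝ)) * Real.log R ^ β := by
            positivity
          calc (c₁ * 2 ^ σ' * cA ^ β * cJ * 2 ^ (α - (N:ℝ)) * Real.log R ^ β) *
                (R ^ ((N:ℝ) - σ') * R ^ (-α))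
              ≤ (c₁ * 2 ^ σ' * cA ^ β * cJ * 2 ^ (α - (N:ℝ)) * Real.log R ^ β) *
                (A ^ ((N:ℝ) - σ') * R ^ (-α)) := by
                apply mul_le_mul_of_nonneg_left _ hpos
                exact mul_le_mul_of_nonneg_right hRA (Real.rpow_nonneg hR0.le _)
            _ = (c₁ * 2 ^ σ' * cA ^ β * cJ * 2 ^ (α - (N:ℝ)) * A ^ ((N:ℝ) - σ')) *
                (R ^ (-α) * Real.log R ^ β) := by ring
  · -- case β < 0
    obtain ⟨cJ, hcJ, hcJ'⟩ := aux_ball hN (γ := α - β) (by linarith) (by linarith)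
    obtain ⟨cL, hcL, hcL'⟩ := aux_log_rpow_le hA (-β) (ε := σ' - N) (by linarith)
    refine ⟨c₁ * 2 ^ σ' * 2 ^ (-β) * cJ * 2 ^ (α - β - (N:ℝ)) * cL, by positivity, fun x => ?_⟩
    set R : ℝ := A + ‖x‖ with hR_def
    have hR1 : 1 < R := by have := norm_nonneg x; simp only [hR_def]; linarith
    have hR0 : (0:ℝ) < R := by linarith
    have hR2 : 0 < R/2 := by linarith
    have hAR : A ≤ R := by simp only [hR_def]; linarith [norm_nonneg x]
    have hlogR : 0 < Real.log R := Real.log_pos hR1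
    have hker : ∀ z : EuclideanSpace ℝ (Fin N), z ∈ Metric.closedBall (0:EuclideanSpace ℝ (Fin N)) (R/2) →
        Kab α β z ≤ ((2*R) ^ (-β)) * ‖z‖ ^ (-(α - β)) := by
      intro z hz
      rw [Metric.mem_closedBall, dist_zero_right] at hz
      by_cases hz0 : z = 0
      · subst hz0
        have : Kab α β (0 : EuclideanSpace ℝ (Fin N)) = 0 := by
          unfold Kab
          simp [Real.zero_rpow (show β ≠ 0 by linarith)]
        rw [this]
        positivity
      have hzn : 0 < ‖z‖ := norm_pos_iff.2 hz0
      have h1 : (0:ℝ) < 1 + ‖z‖ := by positivity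
      have h2 : 1 + ‖z‖ ≤ 2 * R := by linarith
      -- log (1+v) ≥ v/(1+v) ≥ v/(2R)
      have h3 : Real.log (1/(1 + ‖z‖)) ≤ 1/(1 + ‖z‖) - 1 :=
        Real.log_le_sub_one_of_pos (by positivity)
      rw [one_div, Real.log_inv] at h3
      have h4 : ‖z‖ / (1 + ‖z‖) ≤ Real.log (1 + ‖z‖) := by
        have he : 1 - (1 + ‖z‖)⁻¹ = ‖z‖/(1+‖z‖) := by field_simp; ring
        linarith [h3, he]
      have h5 : ‖z‖ / (2*R) ≤ ‖z‖ / (1 + ‖z‖) :=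
        div_le_div_of_nonneg_left (norm_nonneg z) h1 h2
      have h6 : 0 < ‖z‖ / (2*R) := by positivity
      have h7 : Real.log (1 + ‖z‖) ^ β ≤ (‖z‖ / (2*R)) ^ β :=
        Real.rpow_le_rpow_of_nonpos h6 (by linarith) hβ0.le
      have h8 : (‖z‖ / (2*R)) ^ β = ‖z‖ ^ β * (2*R) ^ (-β) := by
        rw [Real.div_rpow (norm_nonneg z) (by linarith), Real.rpow_neg (by linarith),
          div_eq_mul_inv]
      unfold Kab
      calc ‖z‖ ^ (-α) * Real.log (1 + ‖z‖) ^ β ≤ ‖z‖ ^ (-α) * (‖z‖ ^ β * (2*R) ^ (-β)) := by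
            rw [← h8]
            exact mul_le_mul_of_nonneg_left h7 (Real.rpow_nonneg (norm_nonneg z) _)
        _ = ((2*R) ^ (-β)) * ‖z‖ ^ (-(α - β)) := by
            rw [show -(α - β) = -α + β by ring, Real.rpow_add hzn]
            ring
    have hball : ∫⁻ z in Metric.closedBall (0:EuclideanSpace ℝ (Fin N)) (R/2),
        ENNReal.ofReal (Kab α β z) ≤
        ENNReal.ofReal (((2*R) ^ (-β)) * (cJ * (R/2) ^ ((N:ℝ) - (α - β)))) := by
      calc ∫⁻ z in Metric.closedBall (0:EuclideanSpace ℝ (Fin N)) (R/2), ENNReal.ofReal (Kab α β z)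
          ≤ ∫⁻ z in Metric.closedBall (0:EuclideanSpace ℝ (Fin N)) (R/2),
            ENNReal.ofReal (((2*R) ^ (-β)) * ‖z‖ ^ (-(α - β))) := by
            apply setLIntegral_mono' measurableSet_closedBall
            intro z hz
            exact ENNReal.ofReal_le_ofReal (hker z hz)
        _ = ENNReal.ofReal ((2*R) ^ (-β)) *
            ∫⁻ z in Metric.closedBall (0:EuclideanSpace ℝ (Fin N)) (R/2),
              ENNReal.ofReal (‖z‖ ^ (-(α - β))) := by
            simp_rw [ENNReal.ofReal_mul (by positivity : (0:ℝ) ≤ (2*R) ^ (-β))]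
            rw [lintegral_const_mul' _ _ ENNReal.ofReal_ne_top]
        _ ≤ ENNReal.ofReal ((2*R) ^ (-β)) * ENNReal.ofReal (cJ * (R/2) ^ ((N:ℝ) - (α - β))) := by
            gcongr
            exact hcJ' (R/2) hR2
        _ = _ := by rw [← ENNReal.ofReal_mul (by positivity)]
    calc ∫⁻ y in {y : EuclideanSpace ℝ (Fin N) | ‖x - y‖ ≤ (A + ‖x‖)/2},
          ENNReal.ofReal (Kab α β (x - y) * f y)
        ≤ ENNReal.ofReal (c₁ * ((A + ‖x‖)/2) ^ (-σ')) *
          ∫⁻ z in Metric.closedBall (0 : EuclideanSpace ℝ (Fin N)) ((A + ‖x‖)/2),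
            ENNReal.ofReal (Kab α β z) :=
          near_reduction α β A σ' c₁ hA hσ'0 hc₁ f hf0 hfb x
      _ ≤ ENNReal.ofReal (c₁ * (R/2) ^ (-σ')) *
          ENNReal.ofReal (((2*R) ^ (-β)) * (cJ * (R/2) ^ ((N:ℝ) - (α - β)))) := by
          gcongr
      _ = ENNReal.ofReal ((c₁ * (R/2) ^ (-σ')) *
          (((2*R) ^ (-β)) * (cJ * (R/2) ^ ((N:ℝ) - (α - β))))) := by
          rw [← ENNReal.ofReal_mul (by positivity)]
      _ ≤ ENNReal.ofReal ((c₁ * 2 ^ σ' * 2 ^ (-β) * cJ * 2 ^ (α - β - (N:ℝ)) * cL) *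
          (R ^ (-α) * Real.log R ^ β)) := by
          apply ENNReal.ofReal_le_ofReal
          rw [half_rpow hR0.le, half_rpow hR0.le, two_mul_rpow hR0.le]
          have hcomb : R ^ (-σ') * R ^ (-β) * R ^ ((N:ℝ) - (α - β)) =
              R ^ ((N:ℝ) - σ') * R ^ (-α) := by
            rw [← Real.rpow_add hR0, ← Real.rpow_add hR0, ← Real.rpow_add hR0]
            congr 1
            ring
          have hRlog : R ^ ((N:ℝ) - σ') ≤ cL * Real.log R ^ β := by
            have h1 : Real.log R ^ (-β) ≤ cL * R ^ (σ' - N) := hcL' R hAR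
            have hP0 : 0 < Real.log R ^ β := Real.rpow_pos_of_pos hlogR _
            have hQ0 : 0 < R ^ (σ' - (N:ℝ)) := Real.rpow_pos_of_pos hR0 _
            rw [Real.rpow_neg hlogR.le] at h1
            rw [show (N:ℝ) - σ' = -(σ' - (N:ℝ)) by ring, Real.rpow_neg hR0.le]
            exact inv_bound_flip hP0 hQ0 hcL h1
          have e1 : c₁ * (R ^ (-σ') * 2 ^ (- -σ')) *
              ((2:ℝ) ^ (-β) * R ^ (-β) * (cJ * (R ^ ((N:ℝ) - (α - β)) * 2 ^ (-((N:ℝ) - (α - β)))))) =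
              (c₁ * 2 ^ σ' * 2 ^ (-β) * cJ * 2 ^ (α - β - (N:ℝ))) *
                (R ^ (-σ') * R ^ (-β) * R ^ ((N:ℝ) - (α - β))) := by
            rw [neg_neg, show -((N:ℝ) - (α - β)) = α - β - (N:ℝ) by ring]
            ring
          rw [e1, hcomb]
          have hpos : (0:ℝ) ≤ c₁ * 2 ^ σ' * 2 ^ (-β) * cJ * 2 ^ (α - β - (N:ℝ)) := by positivity
          calc (c₁ * 2 ^ σ' * 2 ^ (-β) * cJ * 2 ^ (α - β - (N:ℝ))) *
                (R ^ ((N:ℝ) - σ') * R ^ (-α))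
              ≤ (c₁ * 2 ^ σ' * 2 ^ (-β) * cJ * 2 ^ (α - β - (N:ℝ))) *
                ((cL * Real.log R ^ β) * R ^ (-α)) := by
                apply mul_le_mul_of_nonneg_left _ hpos
                exact mul_le_mul_of_nonneg_right hRlog (Real.rpow_nonneg hR0.le _)
            _ = (c₁ * 2 ^ σ' * 2 ^ (-β) * cJ * 2 ^ (α - β - (N:ℝ)) * cL) *
                (R ^ (-α) * Real.log R ^ β) := by ring


lemma sum_le_two_div_mul {m a b : ℝ} (hm : 0 < m) (ha : m ≤ a) (hb : m ≤ b) :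
    a + b ≤ 2 / m * (a * b) := by
  rw [div_mul_eq_mul_div, le_div_iff₀ hm]
  nlinarith [mul_nonneg (sub_nonneg.2 ha) (sub_nonneg.2 hb)]

lemma log_two_mul_le {A R : ℝ} (hA : 1 < A) (hAR : A ≤ R) :
    Real.log (2 * R) ≤ (1 + Real.log 2 / Real.log A) * Real.log R := by
  have hlogA : 0 < Real.log A := Real.log_pos hA
  have hR0 : (0:ℝ) < R := by linarith
  have h5 : Real.log (2*R) = Real.log 2 + Real.log R := Real.log_mul (by norm_num) hR0.ne'
  have hlar : Real.log A ≤ Real.log R := Real.log_le_log (by linarith) hAR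
  have h6 : Real.log 2 ≤ Real.log 2 / Real.log A * Real.log R := by
    rw [div_mul_eq_mul_div, le_div_iff₀ hlogA]
    nlinarith [Real.log_pos one_lt_two]
  nlinarith


lemma far_ker {N : ℕ} (α β A δ : ℝ) (hα0 : 0 ≤ α) (hA : 1 < A) (hδ : 0 < δ) :
    ∃ cF : ℝ, 0 < cF ∧ ∀ x : EuclideanSpace ℝ (Fin N),
      ∀ y : EuclideanSpace ℝ (Fin N), (A + ‖x‖)/2 < ‖x - y‖ →
      Kab α β (x - y) ≤ cF * ((A + ‖x‖) ^ (-α) * Real.log (A + ‖x‖) ^ β) * (A + ‖y‖) ^ δ := by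
  have hlogA : 0 < Real.log A := Real.log_pos hA
  have hlog2 : 0 < Real.log 2 := Real.log_pos one_lt_two
  rcases le_or_gt 0 β with hβ0 | hβ0
  · -- β ≥ 0
    obtain ⟨cδ, hcδ, hcδ'⟩ := aux_log_rpow_le hA β hδ
    set cA : ℝ := 1 + Real.log 2 / Real.log A with hcA_def
    have hcA : 0 < cA := by positivity
    set c6 : ℝ := 2 * cA / Real.log A with hc6_def
    have hc6 : 0 < c6 := by positivity
    refine ⟨2 ^ α * c6 ^ β * cδ, by positivity, fun x y hy => ?_⟩
    set R : ℝ := A + ‖x‖ with hR_def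
    have hR1 : 1 < R := by have := norm_nonneg x; simp only [hR_def]; linarith
    have hR0 : (0:ℝ) < R := by linarith
    have hR2 : 0 < R/2 := by linarith
    have hAR : A ≤ R := by simp only [hR_def]; linarith [norm_nonneg x]
    have hlogR : 0 < Real.log R := Real.log_pos hR1
    have hAy : (1:ℝ) ≤ A + ‖y‖ := by linarith [norm_nonneg y]
    have hv0 : (0:ℝ) < ‖x - y‖ := lt_trans hR2 hy
    -- norm part
    have hn : ‖x - y‖ ^ (-α) ≤ 2 ^ α * R ^ (-α) := by
      have h1 : ‖x - y‖ ^ (-α) ≤ (R/2) ^ (-α) :=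
        Real.rpow_le_rpow_of_nonpos hR2 hy.le (by linarith)
      rwa [half_rpow hR0.le, neg_neg, mul_comm] at h1
    -- log part
    have hlup : Real.log (1 + ‖x - y‖) ≤ c6 * Real.log R * Real.log (A + ‖y‖) := by
      have h1 : ‖x - y‖ ≤ ‖x‖ + ‖y‖ := norm_sub_le x y
      have h2 : 1 + ‖x - y‖ ≤ (1 + R) * (A + ‖y‖) := by
        have hAx : ‖x‖ = R - A := by simp only [hR_def]; ring
        nlinarith [norm_nonneg y, norm_nonneg x]
      have h3 : Real.log (1 + ‖x - y‖) ≤ Real.log (1 + R) + Real.log (A + ‖y‖) := by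
        calc Real.log (1 + ‖x - y‖) ≤ Real.log ((1 + R) * (A + ‖y‖)) :=
              Real.log_le_log (by positivity) h2
          _ = Real.log (1 + R) + Real.log (A + ‖y‖) :=
              Real.log_mul (by positivity) (by positivity)
      have ha : Real.log A ≤ Real.log (1 + R) := Real.log_le_log (by linarith) (by linarith)
      have hb : Real.log A ≤ Real.log (A + ‖y‖) := Real.log_le_log (by linarith) (by linarith [norm_nonneg y])
      have hsum : Real.log (1 + R) + Real.log (A + ‖y‖) ≤
          2 / Real.log A * (Real.log (1 + R) * Real.log (A + ‖y‖)) :=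
        sum_le_two_div_mul hlogA ha hb
      have hup : Real.log (1 + R) ≤ cA * Real.log R := by
        have h4 : Real.log (1 + R) ≤ Real.log (2*R) := Real.log_le_log (by linarith) (by linarith)
        have h7 := log_two_mul_le hA hAR
        rw [hcA_def]
        linarith
      calc Real.log (1 + ‖x - y‖) ≤ 2 / Real.log A * (Real.log (1 + R) * Real.log (A + ‖y‖)) := by
            linarith
        _ ≤ 2 / Real.log A * ((cA * Real.log R) * Real.log (A + ‖y‖)) := by
            apply mul_le_mul_of_nonneg_left _ (by positivity)
            exact mul_le_mul_of_nonneg_right hup (Real.log_nonneg hAy)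
        _ = c6 * Real.log R * Real.log (A + ‖y‖) := by rw [hc6_def]; ring
    have hlog_rpow : Real.log (1 + ‖x - y‖) ^ β ≤
        c6 ^ β * Real.log R ^ β * (cδ * (A + ‖y‖) ^ δ) := by
      have h0 : 0 ≤ Real.log (1 + ‖x - y‖) := Real.log_nonneg (by linarith)
      have h1 : Real.log (1 + ‖x - y‖) ^ β ≤ (c6 * Real.log R * Real.log (A + ‖y‖)) ^ β :=
        Real.rpow_le_rpow h0 hlup hβ0
      have h2 : (c6 * Real.log R * Real.log (A + ‖y‖)) ^ β =
          c6 ^ β * Real.log R ^ β * Real.log (A + ‖y‖) ^ β := by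
        rw [Real.mul_rpow (by positivity) (Real.log_nonneg hAy),
          Real.mul_rpow hc6.le hlogR.le]
      have h3 : Real.log (A + ‖y‖) ^ β ≤ cδ * (A + ‖y‖) ^ δ := hcδ' _ (by linarith [norm_nonneg y])
      calc Real.log (1 + ‖x - y‖) ^ β ≤ c6 ^ β * Real.log R ^ β * Real.log (A + ‖y‖) ^ β := by
            rw [← h2]; exact h1
        _ ≤ c6 ^ β * Real.log R ^ β * (cδ * (A + ‖y‖) ^ δ) := by
            apply mul_le_mul_of_nonneg_left h3 (by positivity)
    unfold Kab
    calc ‖x - y‖ ^ (-α) * Real.log (1 + ‖x - y‖) ^ β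
        ≤ (2 ^ α * R ^ (-α)) * (c6 ^ β * Real.log R ^ β * (cδ * (A + ‖y‖) ^ δ)) := by
          apply mul_le_mul hn hlog_rpow (Real.rpow_nonneg (Real.log_nonneg (by linarith)) _)
            (by positivity)
      _ = (2 ^ α * c6 ^ β * cδ) * (R ^ (-α) * Real.log R ^ β) * (A + ‖y‖) ^ δ := by ring
  · -- β < 0
    refine ⟨2 ^ α * 2 ^ (-β), by positivity, fun x y hy => ?_⟩
    set R : ℝ := A + ‖x‖ with hR_def
    have hR1 : 1 < R := by have := norm_nonneg x; simp only [hR_def]; linarith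
    have hR0 : (0:ℝ) < R := by linarith
    have hR2 : 0 < R/2 := by linarith
    have hlogR : 0 < Real.log R := Real.log_pos hR1
    have hAy : (1:ℝ) ≤ A + ‖y‖ := by linarith [norm_nonneg y]
    have hn : ‖x - y‖ ^ (-α) ≤ 2 ^ α * R ^ (-α) := by
      have h1 : ‖x - y‖ ^ (-α) ≤ (R/2) ^ (-α) :=
        Real.rpow_le_rpow_of_nonpos hR2 hy.le (by linarith)
      rwa [half_rpow hR0.le, neg_neg, mul_comm] at h1
    have hldown : Real.log R / 2 ≤ Real.log (1 + ‖x - y‖) := by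
      have h1 : Real.log R ≤ 2 * Real.log (1 + R/2) := by
        have hsq : R ≤ (1 + R/2) ^ (2:ℕ) := by nlinarith
        have := Real.log_le_log hR0 hsq
        rwa [Real.log_pow] at this
      have h2 : Real.log (1 + R/2) ≤ Real.log (1 + ‖x - y‖) :=
        Real.log_le_log (by linarith) (by linarith)
      push_cast at h1
      linarith
    have hlog_rpow : Real.log (1 + ‖x - y‖) ^ β ≤ 2 ^ (-β) * Real.log R ^ β := by
      have h0 : 0 < Real.log R / 2 := by linarith
      have h1 : Real.log (1 + ‖x - y‖) ^ β ≤ (Real.log R / 2) ^ β :=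
        Real.rpow_le_rpow_of_nonpos h0 hldown hβ0.le
      rwa [half_rpow hlogR.le, mul_comm] at h1
    have hone : (1:ℝ) ≤ (A + ‖y‖) ^ δ := Real.one_le_rpow hAy hδ.le
    calc Kab α β (x - y) = ‖x - y‖ ^ (-α) * Real.log (1 + ‖x - y‖) ^ β := rfl
      _ ≤ (2 ^ α * R ^ (-α)) * (2 ^ (-β) * Real.log R ^ β) := by
          apply mul_le_mul hn hlog_rpow
            (Real.rpow_nonneg (Real.log_nonneg (by linarith [norm_nonneg (x - y)])) _) (by positivity)
      _ = (2 ^ α * 2 ^ (-β)) * (R ^ (-α) * Real.log R ^ β) * 1 := by ring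
      _ ≤ (2 ^ α * 2 ^ (-β)) * (R ^ (-α) * Real.log R ^ β) * (A + ‖y‖) ^ δ := by
          apply mul_le_mul_of_nonneg_left hone
          have := Real.rpow_pos_of_pos hR0 (-α)
          have := Real.rpow_pos_of_pos hlogR β
          positivity

lemma far_bound {N : ℕ} (hN : 1 ≤ N) (α β A σ' δ c₁ : ℝ) (hα0 : 0 ≤ α)
    (hA : 1 < A) (hσ' : (N:ℝ) < σ') (hδ : 0 < δ) (hp : (N:ℝ) < σ' - δ) (hc₁ : 0 < c₁)
    (f : EuclideanSpace ℝ (Fin N) → ℝ) (hfm : Measurable f) (hf0 : ∀ y, 0 ≤ f y)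
    (hfb : ∀ y, f y ≤ c₁ * (A + ‖y‖) ^ (-σ')) :
    ∃ Cf : ℝ, 0 < Cf ∧ ∀ x : EuclideanSpace ℝ (Fin N),
      ∫⁻ y in {y : EuclideanSpace ℝ (Fin N) | ‖x - y‖ ≤ (A + ‖x‖)/2}ᶜ,
          ENNReal.ofReal (Kab α β (x - y) * f y) ≤
        ENNReal.ofReal (Cf * ((A + ‖x‖) ^ (-α) * Real.log (A + ‖x‖) ^ β)) := by
  have hσ'0 : (0:ℝ) < σ' := lt_of_le_of_lt (Nat.cast_nonneg N) hσ'
  have hlogA : 0 < Real.log A := Real.log_pos hA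
  have hlog2 : 0 < Real.log 2 := Real.log_pos one_lt_two
  -- the tail integral
  set Mp : ℝ≥0∞ := ∫⁻ y : EuclideanSpace ℝ (Fin N), ENNReal.ofReal ((1 + ‖y‖) ^ (-(σ' - δ)))
    with hMp_def
  have hMp : Mp < ⊤ := by
    rw [hMp_def]
    apply finite_integral_one_add_norm
    rw [finrank_euclideanSpace_fin]
    exact hp
  obtain ⟨cF, hcF, hker⟩ := far_ker (N := N) α β A δ hα0 hA hδ
  refine ⟨cF * c₁ * (Mp.toReal + 1), by positivity, fun x => ?_⟩
  set R : ℝ := A + ‖x‖ with hR_def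
  have hR1 : 1 < R := by have := norm_nonneg x; simp only [hR_def]; linarith
  have hR0 : (0:ℝ) < R := by linarith
  have hlogR : 0 < Real.log R := Real.log_pos hR1
  have hT : (0:ℝ) < R ^ (-α) * Real.log R ^ β := by
    have := Real.rpow_pos_of_pos hR0 (-α)
    have := Real.rpow_pos_of_pos hlogR β
    positivity
  have hsm : MeasurableSet {y : EuclideanSpace ℝ (Fin N) | ‖x - y‖ ≤ R/2} :=
    (measurable_norm.comp (measurable_const.sub measurable_id)) measurableSet_Iic
  calc ∫⁻ y in {y : EuclideanSpace ℝ (Fin N) | ‖x - y‖ ≤ R/2}ᶜ,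
        ENNReal.ofReal (Kab α β (x - y) * f y)
      ≤ ∫⁻ y in {y : EuclideanSpace ℝ (Fin N) | ‖x - y‖ ≤ R/2}ᶜ,
        ENNReal.ofReal ((cF * (R ^ (-α) * Real.log R ^ β) * c₁) * (1 + ‖y‖) ^ (-(σ' - δ))) := by
        apply setLIntegral_mono' hsm.compl
        intro y hy
        apply ENNReal.ofReal_le_ofReal
        have hy' : R/2 < ‖x - y‖ := by
          simpa [Set.mem_setOf_eq, not_le] using hy
        have hb1 : Kab α β (x - y) * f y ≤
            (cF * (R ^ (-α) * Real.log R ^ β) * (A + ‖y‖) ^ δ) * f y := by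
          apply mul_le_mul_of_nonneg_right _ (hf0 y)
          have := hker x y hy'
          linarith [this]
        have hb2 : (A + ‖y‖) ^ δ * f y ≤ c₁ * (1 + ‖y‖) ^ (-(σ' - δ)) := by
          have hAy : (0:ℝ) < A + ‖y‖ := by linarith [norm_nonneg y]
          calc (A + ‖y‖) ^ δ * f y ≤ (A + ‖y‖) ^ δ * (c₁ * (A + ‖y‖) ^ (-σ')) := by
                exact mul_le_mul_of_nonneg_left (hfb y) (Real.rpow_nonneg hAy.le _)
            _ = c₁ * (A + ‖y‖) ^ (δ - σ') := by
                rw [show δ - σ' = δ + -σ' by ring, Real.rpow_add hAy]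
                ring
            _ ≤ c₁ * (1 + ‖y‖) ^ (δ - σ') := by
                apply mul_le_mul_of_nonneg_left _ hc₁.le
                apply Real.rpow_le_rpow_of_nonpos (by linarith [norm_nonneg y])
                  (by linarith) (by linarith)
            _ = c₁ * (1 + ‖y‖) ^ (-(σ' - δ)) := by rw [show δ - σ' = -(σ' - δ) by ring]
        have hKnn : 0 ≤ cF * (R ^ (-α) * Real.log R ^ β) := by positivity
        calc Kab α β (x - y) * f y ≤ (cF * (R ^ (-α) * Real.log R ^ β)) * ((A + ‖y‖) ^ δ * f y) := by
              rw [← mul_assoc]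
              exact hb1
          _ ≤ (cF * (R ^ (-α) * Real.log R ^ β)) * (c₁ * (1 + ‖y‖) ^ (-(σ' - δ))) :=
              mul_le_mul_of_nonneg_left hb2 hKnn
          _ = (cF * (R ^ (-α) * Real.log R ^ β) * c₁) * (1 + ‖y‖) ^ (-(σ' - δ)) := by ring
    _ ≤ ∫⁻ y : EuclideanSpace ℝ (Fin N),
        ENNReal.ofReal ((cF * (R ^ (-α) * Real.log R ^ β) * c₁) * (1 + ‖y‖) ^ (-(σ' - δ))) :=
        setLIntegral_le_lintegral _ _
    _ = ENNReal.ofReal (cF * (R ^ (-α) * Real.log R ^ β) * c₁) * Mp := by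
        simp_rw [ENNReal.ofReal_mul (by positivity : (0:ℝ) ≤ cF * (R ^ (-α) * Real.log R ^ β) * c₁)]
        rw [lintegral_const_mul' _ _ ENNReal.ofReal_ne_top, hMp_def]
    _ = ENNReal.ofReal (cF * (R ^ (-α) * Real.log R ^ β) * c₁ * Mp.toReal) := by
        rw [← ENNReal.ofReal_toReal hMp.ne, ← ENNReal.ofReal_mul (by positivity),
          ENNReal.ofReal_toReal hMp.ne]
    _ ≤ ENNReal.ofReal ((cF * c₁ * (Mp.toReal + 1)) * (R ^ (-α) * Real.log R ^ β)) := by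
        apply ENNReal.ofReal_le_ofReal
        have h2 : (0:ℝ) ≤ Mp.toReal := ENNReal.toReal_nonneg
        nlinarith [hT, mul_pos (mul_pos hcF hT) hc₁]

theorem stmt6 (N : ℕ) (hN : 1 ≤ N) (α β σ κ c A : ℝ) (hα0 : 0 ≤ α) (hαN : α < N)
    (hβ : α - N < β) (hA : 1 < A) (hσ : (N : ℝ) < σ) (hc : 0 < c)
    (f : EuclideanSpace ℝ (Fin N) → ℝ) (hfm : Measurable f) (hf0 : ∀ x, 0 ≤ f x)
    (hup : ∀ x : EuclideanSpace ℝ (Fin N),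
      f x ≤ c * ((A + ‖x‖) ^ (-σ) * (Real.log (A + ‖x‖)) ^ κ)) :
    ∃ C > 0, ∀ x : EuclideanSpace ℝ (Fin N),
      convK α β f x ≤ C * ((A + ‖x‖) ^ (-α) * (Real.log (A + ‖x‖)) ^ β) := by
  set σ' : ℝ := (σ + N)/2 with hσ'_def
  have hσ'1 : (N:ℝ) < σ' := by simp only [hσ'_def]; linarith
  have hσ'2 : σ' < σ := by simp only [hσ'_def]; linarith
  set δ : ℝ := (σ' - N)/2 with hδ_def
  have hδpos : 0 < δ := by simp only [hδ_def]; linarith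
  have hp : (N:ℝ) < σ' - δ := by simp only [hδ_def]; linarith
  obtain ⟨cκ, hcκ, hcκ'⟩ := aux_log_rpow_le hA κ (ε := σ - σ') (by linarith)
  have hfb : ∀ y, f y ≤ (c * cκ) * (A + ‖y‖) ^ (-σ') := by
    intro y
    have hAy : (0:ℝ) < A + ‖y‖ := by linarith [norm_nonneg y]
    have h2 : Real.log (A + ‖y‖) ^ κ ≤ cκ * (A + ‖y‖) ^ (σ - σ') :=
      hcκ' _ (by linarith [norm_nonneg y])
    have h3 : (A + ‖y‖) ^ (-σ) * ((A + ‖y‖) ^ (σ - σ')) = (A + ‖y‖) ^ (-σ') := by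
      rw [← Real.rpow_add hAy]
      congr 1
      ring
    calc f y ≤ c * ((A + ‖y‖) ^ (-σ) * Real.log (A + ‖y‖) ^ κ) := hup y
      _ ≤ c * ((A + ‖y‖) ^ (-σ) * (cκ * (A + ‖y‖) ^ (σ - σ'))) := by
          apply mul_le_mul_of_nonneg_left _ hc.le
          exact mul_le_mul_of_nonneg_left h2 (Real.rpow_nonneg hAy.le _)
      _ = (c * cκ) * ((A + ‖y‖) ^ (-σ) * (A + ‖y‖) ^ (σ - σ')) := by ring
      _ = (c * cκ) * (A + ‖y‖) ^ (-σ') := by rw [h3]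
  obtain ⟨Cn, hCn, hnear⟩ :=
    near_bound hN α β A σ' (c*cκ) hα0 hαN hβ hA hσ'1 (by positivity) f hf0 hfb
  obtain ⟨Cf, hCf, hfar⟩ :=
    far_bound hN α β A σ' δ (c*cκ) hα0 hA hσ'1 hδpos hp (by positivity) f hfm hf0 hfb
  refine ⟨Cn + Cf, by positivity, fun x => ?_⟩
  have hR1 : 1 < A + ‖x‖ := by linarith [norm_nonneg x]
  have hR0 : (0:ℝ) < A + ‖x‖ := by linarith
  have hlogR : 0 < Real.log (A + ‖x‖) := Real.log_pos hR1
  have hT : (0:ℝ) < (A + ‖x‖) ^ (-α) * Real.log (A + ‖x‖) ^ β := by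
    have h1 := Real.rpow_pos_of_pos hR0 (-α)
    have h2 := Real.rpow_pos_of_pos hlogR β
    positivity
  have key : ∫⁻ y, ENNReal.ofReal (Kab α β (x - y) * f y) ≤
      ENNReal.ofReal ((Cn + Cf) * ((A + ‖x‖) ^ (-α) * Real.log (A + ‖x‖) ^ β)) := by
    have hs : MeasurableSet {y : EuclideanSpace ℝ (Fin N) | ‖x - y‖ ≤ (A + ‖x‖)/2} :=
      (measurable_norm.comp (measurable_const.sub measurable_id)) measurableSet_Iic
    rw [← lintegral_add_compl (fun y => ENNReal.ofReal (Kab α β (x - y) * f y)) hs]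
    calc (∫⁻ y in {y : EuclideanSpace ℝ (Fin N) | ‖x - y‖ ≤ (A + ‖x‖)/2},
            ENNReal.ofReal (Kab α β (x - y) * f y)) +
          ∫⁻ y in {y : EuclideanSpace ℝ (Fin N) | ‖x - y‖ ≤ (A + ‖x‖)/2}ᶜ,
            ENNReal.ofReal (Kab α β (x - y) * f y)
        ≤ ENNReal.ofReal (Cn * ((A + ‖x‖) ^ (-α) * Real.log (A + ‖x‖) ^ β)) +
          ENNReal.ofReal (Cf * ((A + ‖x‖) ^ (-α) * Real.log (A + ‖x‖) ^ β)) :=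
          add_le_add (hnear x) (hfar x)
      _ = ENNReal.ofReal ((Cn + Cf) * ((A + ‖x‖) ^ (-α) * Real.log (A + ‖x‖) ^ β)) := by
          rw [← ENNReal.ofReal_add (by positivity) (by positivity)]
          congr 1
          ring
  by_cases hInt : Integrable (fun y => Kab α β (x - y) * f y) volume
  · unfold convK
    rw [integral_eq_lintegral_of_nonneg_ae
      (Filter.Eventually.of_forall (fun y => mul_nonneg (Kab_nonneg α β _) (hf0 y)))
      ((((Kab_measurable α β).comp (measurable_const.sub measurable_id')) :
          Measurable fun y => Kab α β (x - y)).mul hfm).aestronglyMeasurable]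
    exact ENNReal.toReal_le_of_le_ofReal (by positivity) key
  · unfold convK
    rw [integral_undef hInt]
    positivity
end

section
/- Let N ≥ 3, w(x) = (A + |x|²)^{1/2} with A > e, and v(x) = w(x)^{-γ} log^{τ} w(x) with 2 < γ ≤ N and −1 < τ < 1. Then there exists λ* > 0 (depending on N, A, γ, τ) such that for all λ > λ*, −Δv + (λ/2) v ≥ 0 pointwise in ℝᴺ. -/
open MeasureTheory Real
open scoped ENNReal

noncomputable def bb (A s : ℝ) : ℝ := Real.sqrt (A + s)
noncomputable def LL (A s : ℝ) : ℝ := Real.log (bb A s)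
noncomputable def gg (A γ τ s : ℝ) : ℝ := bb A s ^ (-γ) * LL A s ^ τ
noncomputable def g1 (A γ τ s : ℝ) : ℝ :=
  bb A s ^ (-γ - 2) * (-(γ/2) * LL A s ^ τ + (τ/2) * LL A s ^ (τ-1))
noncomputable def g2 (A γ τ s : ℝ) : ℝ :=
  bb A s ^ (-γ - 4) * ((γ*(γ+2)/4) * LL A s ^ τ - (τ*(γ+1)/2) * LL A s ^ (τ-1)
    + (τ*(τ-1)/4) * LL A s ^ (τ-2))

variable {A γ τ s : ℝ}

lemma hA1 (hA : Real.exp 1 < A) (hs : 0 ≤ s) : 1 < A + s := by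
  have := Real.exp_one_gt_d9
  nlinarith

lemma bb_gt_one (hA : Real.exp 1 < A) (hs : 0 ≤ s) : 1 < bb A s := by
  have h := hA1 hA hs
  have : Real.sqrt 1 < Real.sqrt (A + s) := Real.sqrt_lt_sqrt (by norm_num) h
  simpa [Real.sqrt_one, bb] using this

lemma LL_gt_half (hA : Real.exp 1 < A) (hs : 0 ≤ s) : 1/2 < LL A s := by
  have h1 : Real.exp 1 < A + s := by linarith
  have hpos : (0:ℝ) ≤ A + s := by nlinarith [Real.exp_pos 1]
  have : LL A s = Real.log (A + s) / 2 := by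
    simp only [LL, bb, Real.log_sqrt hpos]
  rw [this]
  have h2 : 1 < Real.log (A + s) := by
    have hlog : Real.exp 1 < Real.exp (Real.log (A+s)) := by
      rwa [Real.exp_log (by linarith [Real.exp_pos 1])]
    exact Real.exp_lt_exp.mp hlog
  linarith

-- derivative of bb
lemma hasDerivAt_bb (hA : Real.exp 1 < A) (hs : 0 ≤ s) :
    HasDerivAt (bb A) (1 / (2 * bb A s)) s := by
  have hne : A + s ≠ 0 := by have := hA1 hA hs; linarith
  exact ((Real.hasDerivAt_sqrt hne).comp s ((hasDerivAt_id s).const_add A)).congr_deriv (by simp [bb])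

lemma bb_pos (hA : Real.exp 1 < A) (hs : 0 ≤ s) : 0 < bb A s :=
  lt_trans one_pos (bb_gt_one hA hs)

lemma LL_pos (hA : Real.exp 1 < A) (hs : 0 ≤ s) : 0 < LL A s :=
  lt_trans (by norm_num) (LL_gt_half hA hs)

lemma rpow_collapse (hA : Real.exp 1 < A) (hs : 0 ≤ s) (c d : ℝ) :
    bb A s ^ c * bb A s ^ d = bb A s ^ (c + d) :=
  (Real.rpow_add (bb_pos hA hs) c d).symm

lemma hasDerivAt_bb_rpow (hA : Real.exp 1 < A) (hs : 0 ≤ s) (c : ℝ) :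
    HasDerivAt (fun t => bb A t ^ c) ((c/2) * bb A s ^ (c - 2)) s := by
  have hb := bb_pos hA hs
  have h := (Real.hasDerivAt_rpow_const (p := c) (Or.inl hb.ne')).comp s (hasDerivAt_bb hA hs)
  refine h.congr_deriv ?_
  have h1 : bb A s ^ (c - 1) = bb A s ^ (c - 2) * bb A s := by
    have h2 := rpow_collapse hA hs (c-2) 1
    rw [Real.rpow_one] at h2
    rw [show c - 1 = c - 2 + 1 by ring, ← h2]
  rw [h1]; field_simp

lemma hasDerivAt_LL (hA : Real.exp 1 < A) (hs : 0 ≤ s) :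
    HasDerivAt (LL A) ((1/2) * bb A s ^ (-2 : ℝ)) s := by
  have hb := bb_pos hA hs
  have h := (Real.hasDerivAt_log hb.ne').comp s (hasDerivAt_bb hA hs)
  refine h.congr_deriv ?_
  have h2 : bb A s ^ (-2:ℝ) = (bb A s ^ (2:ℕ) : ℝ)⁻¹ := by
    rw [show (-2:ℝ) = -((2:ℕ):ℝ) by norm_num, Real.rpow_neg hb.le, Real.rpow_natCast]
  rw [h2]
  field_simp

lemma hasDerivAt_LL_rpow (hA : Real.exp 1 < A) (hs : 0 ≤ s) (c : ℝ) :
    HasDerivAt (fun t => LL A t ^ c)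
      ((c/2) * LL A s ^ (c - 1) * bb A s ^ (-2 : ℝ)) s := by
  have hL := LL_pos hA hs
  have h := (Real.hasDerivAt_rpow_const (p := c) (Or.inl hL.ne')).comp s (hasDerivAt_LL hA hs)
  refine h.congr_deriv ?_
  ring

lemma hasDerivAt_gg (hA : Real.exp 1 < A) (hs : 0 ≤ s) :
    HasDerivAt (gg A γ τ) (g1 A γ τ s) s := by
  have h := (hasDerivAt_bb_rpow hA hs (-γ)).mul (hasDerivAt_LL_rpow hA hs τ)
  refine h.congr_deriv ?_
  simp only [g1]
  have e1 : bb A s ^ (-γ - 2) = bb A s ^ (-γ) * bb A s ^ (-2:ℝ) := by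
    rw [rpow_collapse hA hs]; congr 1 <;> ring
  rw [e1]
  ring

lemma hasDerivAt_g1 (hA : Real.exp 1 < A) (hs : 0 ≤ s) :
    HasDerivAt (g1 A γ τ) (g2 A γ τ s) s := by
  have hP : HasDerivAt (fun t => -(γ/2) * LL A t ^ τ + (τ/2) * LL A t ^ (τ-1))
      (-(γ/2) * ((τ/2) * LL A s ^ (τ - 1) * bb A s ^ (-2 : ℝ))
        + (τ/2) * (((τ-1)/2) * LL A s ^ (τ - 1 - 1) * bb A s ^ (-2 : ℝ))) s :=
    ((hasDerivAt_LL_rpow hA hs τ).const_mul _).add ((hasDerivAt_LL_rpow hA hs (τ-1)).const_mul _)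
  have h := (hasDerivAt_bb_rpow hA hs (-γ - 2)).mul hP
  refine h.congr_deriv ?_
  simp only [g2]
  have e1 : bb A s ^ (-γ - 2) = bb A s ^ (-γ) * bb A s ^ (-2:ℝ) := by
    rw [rpow_collapse hA hs]; congr 1 <;> ring
  have e2 : bb A s ^ (-γ - 4) = bb A s ^ (-γ) * bb A s ^ (-2:ℝ) * bb A s ^ (-2:ℝ) := by
    rw [rpow_collapse hA hs, rpow_collapse hA hs]; congr 1 <;> ring
  have e3 : bb A s ^ (-γ - 2 - 2) = bb A s ^ (-γ) * bb A s ^ (-2:ℝ) * bb A s ^ (-2:ℝ) := by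
    rw [rpow_collapse hA hs, rpow_collapse hA hs]; congr 1 <;> ring
  have e4 : LL A s ^ (τ - 2) = LL A s ^ (τ - 1 - 1) := by congr 1 <;> ring
  rw [e1, e2, e3, e4]
  ring

section bounds
variable (hA : Real.exp 1 < A) (hs : 0 ≤ s) (hγ1 : 2 < γ) (hτ1 : -1 < τ) (hτ2 : τ < 1)
include hA hs

lemma gg_pos : 0 < gg A γ τ s := by
  have hb := bb_pos hA hs
  have hL := LL_pos hA hs
  exact mul_pos (Real.rpow_pos_of_pos hb _) (Real.rpow_pos_of_pos hL _)

lemma Lm1_le : LL A s ^ (τ - 1) ≤ 2 * LL A s ^ τ := by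
  have hL := LL_pos hA hs
  have hLh := LL_gt_half hA hs
  rw [Real.rpow_sub_one hL.ne']
  rw [div_le_iff₀ hL]
  have hτ : 0 < LL A s ^ τ := Real.rpow_pos_of_pos hL _
  nlinarith

lemma Lm2_le : LL A s ^ (τ - 2) ≤ 4 * LL A s ^ τ := by
  have hL := LL_pos hA hs
  have hLh := LL_gt_half hA hs
  have h : LL A s ^ (τ - 2) = LL A s ^ τ / (LL A s * LL A s) := by
    rw [show τ - 2 = τ - 1 - 1 by ring, Real.rpow_sub_one hL.ne', Real.rpow_sub_one hL.ne']
    ring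
  rw [h, div_le_iff₀ (by positivity)]
  have hτ : 0 < LL A s ^ τ := Real.rpow_pos_of_pos hL _
  have h14 : (1:ℝ)/4 ≤ LL A s * LL A s := by nlinarith
  nlinarith [mul_le_mul_of_nonneg_left h14 hτ.le]

lemma bexp_le : bb A s ^ (-γ - 2) ≤ bb A s ^ (-γ) :=
  Real.rpow_le_rpow_of_exponent_le (bb_gt_one hA hs).le (by linarith)

lemma s_bexp_le : s * bb A s ^ (-γ - 4) ≤ bb A s ^ (-γ) := by
  have hb := bb_pos hA hs
  have hb1 := bb_gt_one hA hs
  have e2 : bb A s ^ (-γ - 4) = bb A s ^ (-γ - 2) * bb A s ^ (-2:ℝ) := by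
    rw [rpow_collapse hA hs]; congr 1 ; ring
  have hbs : bb A s ^ (-2:ℝ) = (A + s)⁻¹ := by
    rw [show (-2:ℝ) = -((2:ℕ):ℝ) by norm_num, Real.rpow_neg hb.le, Real.rpow_natCast]
    rw [bb, Real.sq_sqrt (by nlinarith [hA1 hA hs])]
  have hAs : 0 < A + s := by nlinarith [hA1 hA hs]
  have h1 : s * bb A s ^ (-2:ℝ) ≤ 1 := by
    rw [hbs]
    rw [mul_inv_le_iff₀ hAs]
    nlinarith [hA1 hA hs, Real.exp_pos 1]
  calc s * bb A s ^ (-γ - 4) = (s * bb A s ^ (-2:ℝ)) * bb A s ^ (-γ - 2) := by rw [e2]; ring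
    _ ≤ 1 * bb A s ^ (-γ - 2) := by
        apply mul_le_mul_of_nonneg_right h1 (Real.rpow_pos_of_pos hb _).le
    _ = bb A s ^ (-γ - 2) := one_mul _
    _ ≤ bb A s ^ (-γ) := bexp_le hA hs

include hγ1 hτ1 hτ2

lemma g1_bound : |g1 A γ τ s| ≤ (γ/2 + 1) * gg A γ τ s := by
  have hb := bb_pos hA hs
  have hL := LL_pos hA hs
  have hbγ : 0 < bb A s ^ (-γ) := Real.rpow_pos_of_pos hb _
  have hLτ : 0 < LL A s ^ τ := Real.rpow_pos_of_pos hL _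
  have hLm1 : 0 < LL A s ^ (τ-1) := Real.rpow_pos_of_pos hL _
  have hm1 := Lm1_le hA hs (τ := τ)
  have hP : |(-(γ/2) * LL A s ^ τ + (τ/2) * LL A s ^ (τ-1))| ≤ (γ/2 + 1) * LL A s ^ τ := by
    have := abs_add_le (-(γ/2) * LL A s ^ τ) ((τ/2) * LL A s ^ (τ-1))
    rw [abs_mul, abs_mul] at this
    have h1 : |(-(γ/2))| = γ/2 := by rw [abs_neg, abs_of_nonneg]; linarith
    have h2 : |LL A s ^ τ| = LL A s ^ τ := abs_of_pos hLτ
    have h3 : |LL A s ^ (τ-1)| = LL A s ^ (τ-1) := abs_of_pos hLm1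
    have h4 : |τ/2| ≤ 1/2 := by rw [abs_le]; constructor <;> linarith
    rw [h1, h2, h3] at this
    have h5 : |τ/2| * LL A s ^ (τ-1) ≤ (1/2) * (2 * LL A s ^ τ) := by
      apply mul_le_mul h4 hm1 hLm1.le (by norm_num)
    nlinarith
  rw [g1, abs_mul, abs_of_pos (Real.rpow_pos_of_pos hb (-γ - 2))]
  calc bb A s ^ (-γ-2) * |(-(γ/2) * LL A s ^ τ + (τ/2) * LL A s ^ (τ-1))|
      ≤ bb A s ^ (-γ) * ((γ/2 + 1) * LL A s ^ τ) := by
        apply mul_le_mul (bexp_le hA hs) hP (abs_nonneg _) hbγ.le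
    _ = (γ/2 + 1) * gg A γ τ s := by rw [gg]; ring

lemma sg2_bound : |s * g2 A γ τ s| ≤ (γ*(γ+2)/4 + γ + 3) * gg A γ τ s := by
  have hb := bb_pos hA hs
  have hL := LL_pos hA hs
  have hbγ : 0 < bb A s ^ (-γ) := Real.rpow_pos_of_pos hb _
  have hLτ : 0 < LL A s ^ τ := Real.rpow_pos_of_pos hL _
  have hLm1 : 0 < LL A s ^ (τ-1) := Real.rpow_pos_of_pos hL _
  have hLm2 : 0 < LL A s ^ (τ-2) := Real.rpow_pos_of_pos hL _
  have hm1 := Lm1_le hA hs (τ := τ)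
  have hm2 := Lm2_le hA hs (τ := τ)
  set Q := (γ*(γ+2)/4) * LL A s ^ τ - (τ*(γ+1)/2) * LL A s ^ (τ-1)
    + (τ*(τ-1)/4) * LL A s ^ (τ-2) with hQ
  have hPabs : |Q| ≤ (γ*(γ+2)/4 + γ + 3) * LL A s ^ τ := by
    have t1 : |(γ*(γ+2)/4) * LL A s ^ τ| = (γ*(γ+2)/4) * LL A s ^ τ := by
      rw [abs_mul, abs_of_pos hLτ, abs_of_nonneg (by nlinarith)]
    have t2 : |(τ*(γ+1)/2) * LL A s ^ (τ-1)| ≤ ((γ+1)/2) * (2 * LL A s ^ τ) := by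
      rw [abs_mul, abs_of_pos hLm1]
      apply mul_le_mul _ hm1 hLm1.le (by linarith)
      rw [abs_le]; constructor <;> nlinarith
    have t3 : |(τ*(τ-1)/4) * LL A s ^ (τ-2)| ≤ (1/2) * (4 * LL A s ^ τ) := by
      rw [abs_mul, abs_of_pos hLm2]
      apply mul_le_mul _ hm2 hLm2.le (by norm_num)
      rw [abs_le]; constructor <;> nlinarith
    calc |Q| ≤ |(γ*(γ+2)/4) * LL A s ^ τ| + |(τ*(γ+1)/2) * LL A s ^ (τ-1)|
          + |(τ*(τ-1)/4) * LL A s ^ (τ-2)| := by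
          rw [hQ]; exact (abs_add_le _ _).trans (add_le_add_left (abs_sub _ _) _)
      _ ≤ (γ*(γ+2)/4) * LL A s ^ τ + ((γ+1)/2) * (2 * LL A s ^ τ) + (1/2) * (4 * LL A s ^ τ) := by
          rw [t1]; gcongr
      _ = (γ*(γ+2)/4 + γ + 3) * LL A s ^ τ := by ring
  have hsb := s_bexp_le hA hs (γ := γ)
  have hbpos : 0 < bb A s ^ (-γ - 4) := Real.rpow_pos_of_pos hb _
  have : |s * g2 A γ τ s| = (s * bb A s ^ (-γ-4)) * |Q| := by
    rw [g2, ← hQ, show s * (bb A s ^ (-γ-4) * Q) = (s * bb A s ^ (-γ-4)) * Q by ring,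
      abs_mul, abs_of_nonneg (by positivity)]
  rw [this]
  calc (s * bb A s ^ (-γ-4)) * |Q| ≤ bb A s ^ (-γ) * ((γ*(γ+2)/4 + γ + 3) * LL A s ^ τ) :=
        mul_le_mul hsb hPabs (abs_nonneg _) hbγ.le
    _ = (γ*(γ+2)/4 + γ + 3) * gg A γ τ s := by rw [gg]; ring

end bounds


variable {N : ℕ}

local notation "E" => EuclideanSpace ℝ (Fin N)

noncomputable def TT (N : ℕ) : EuclideanSpace ℝ (Fin N) →L[ℝ] (EuclideanSpace ℝ (Fin N) →L[ℝ] ℝ) :=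
  ∑ i, (2:ℝ) • ((EuclideanSpace.proj i).smulRight (EuclideanSpace.proj i))

lemma TT_apply (x y : E) : TT N x y = ∑ i, 2 * x i * y i := by
  simp [TT, ContinuousLinearMap.sum_apply, mul_assoc]

lemma q_eq (x : E) : ‖x‖^2 = ∑ i, (x i)^2 := by
  rw [EuclideanSpace.norm_eq, Real.sq_sqrt (by positivity)]
  simp [sq_abs]

lemma hasFDerivAt_q (x : E) : HasFDerivAt (fun z : E => ∑ i, (z i)^2) (TT N x) x := by
  have h : ∀ i : Fin N, HasFDerivAt (fun z : E => (z i)^2)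
      ((2:ℝ) • ((x i) • (EuclideanSpace.proj i : EuclideanSpace ℝ (Fin N) →L[ℝ] ℝ))) x := by
    intro i
    have hp : HasFDerivAt (fun z : E => z i) (EuclideanSpace.proj i : EuclideanSpace ℝ (Fin N) →L[ℝ] ℝ) x :=
      (EuclideanSpace.proj i : EuclideanSpace ℝ (Fin N) →L[ℝ] ℝ).hasFDerivAt
    have := hp.mul hp
    refine (this.congr_fderiv ?_).congr_of_eventuallyEq (Filter.Eventually.of_forall fun z => by simp only [Pi.mul_apply, sq])
    ext z
    simp [two_smul]
  have h2 := HasFDerivAt.fun_sum (u := Finset.univ) (fun i _ => h i)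
  refine h2.congr_fderiv ?_
  simp only [TT]
  ext z
  simp [ContinuousLinearMap.sum_apply, mul_assoc, mul_comm]

lemma single_sq_sum (i : Fin N) (y : E) :
    TT N y (EuclideanSpace.single i 1) = 2 * y i := by
  rw [TT_apply]
  simp [EuclideanSpace.single_apply, Finset.sum_ite_eq, mul_comm]

lemma lap_radial (g g1 g2 : ℝ → ℝ)
    (hg : ∀ s, 0 ≤ s → HasDerivAt g (g1 s) s)
    (hg1 : ∀ s, 0 ≤ s → HasDerivAt g1 (g2 s) s) (x : E) :
    lap (fun z : E => g (‖z‖^2)) x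
      = 2 * N * g1 (‖x‖^2) + 4 * ‖x‖^2 * g2 (‖x‖^2) := by
  have hq : ∀ z : E, (0:ℝ) ≤ ∑ i, (z i)^2 := fun z => Finset.sum_nonneg fun i _ => sq_nonneg _
  have hfe : (fun z : E => g (‖z‖^2)) = fun z : E => g (∑ i, (z i)^2) := by
    funext z; rw [q_eq]
  have hf : ∀ y : E, HasFDerivAt (fun z : E => g (∑ i, (z i)^2))
      (g1 (∑ i, (y i)^2) • TT N y) y := fun y =>
    (hg _ (hq y)).comp_hasFDerivAt y (hasFDerivAt_q y)
  have hfd : (fderiv ℝ (fun z : E => g (∑ i, (z i)^2)))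
      = fun y : E => g1 (∑ i, (y i)^2) • TT N y := funext fun y => (hf y).fderiv
  have hc : HasFDerivAt (fun y : E => g1 (∑ i, (y i)^2)) (g2 (∑ i, (x i)^2) • TT N x) x :=
    (hg1 _ (hq x)).comp_hasFDerivAt x (hasFDerivAt_q x)
  have hG : HasFDerivAt (fun y : E => g1 (∑ i, (y i)^2) • TT N y)
      (g1 (∑ i, (x i)^2) • TT N + (g2 (∑ i, (x i)^2) • TT N x).smulRight (TT N x)) x :=
    hc.smul (TT N).hasFDerivAt
  have hD : fderiv ℝ (fderiv ℝ (fun z : E => g (∑ i, (z i)^2))) x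
      = g1 (∑ i, (x i)^2) • TT N + (g2 (∑ i, (x i)^2) • TT N x).smulRight (TT N x) := by
    rw [hfd]; exact hG.fderiv
  rw [lap, hfe]
  have key : ∀ i : Fin N,
      iteratedFDeriv ℝ 2 (fun z : E => g (∑ i, (z i)^2)) x
        ![EuclideanSpace.single i 1, EuclideanSpace.single i 1]
      = 2 * g1 (∑ j, (x j)^2) + (2 * x i) * (g2 (∑ j, (x j)^2) * (2 * x i)) := by
    intro i
    rw [iteratedFDeriv_two_apply]
    simp only [Matrix.cons_val_zero, Matrix.cons_val_one, Matrix.head_cons]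
    rw [hD]
    simp only [ContinuousLinearMap.add_apply, ContinuousLinearMap.smul_apply,
      ContinuousLinearMap.smulRight_apply, single_sq_sum, smul_eq_mul]
    simp [EuclideanSpace.single_apply]
    ring
  rw [Finset.sum_congr rfl (fun i _ => key i)]
  rw [Finset.sum_add_distrib, Finset.sum_const, Finset.card_univ, Fintype.card_fin,
    nsmul_eq_mul]
  have h4 : ∑ i : Fin N, (2 * x i) * (g2 (∑ j, (x j)^2) * (2 * x i))
      = (4 * g2 (∑ j, (x j)^2)) * ∑ i, (x i)^2 := by
    rw [Finset.mul_sum]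
    exact Finset.sum_congr rfl fun i _ => by ring
  rw [h4, q_eq]
  ring
theorem stmt15 (N : ℕ) (hN : 3 ≤ N) (A γ τ : ℝ) (hA : Real.exp 1 < A)
    (hγ1 : 2 < γ) (hγ2 : γ ≤ N) (hτ1 : -1 < τ) (hτ2 : τ < 1) :
    ∃ lam0 > 0, ∀ lam > lam0, ∀ x : EuclideanSpace ℝ (Fin N),
      0 ≤ -(lap (fun z => (Real.sqrt (A + ‖z‖ ^ 2)) ^ (-γ) *
            (Real.log (Real.sqrt (A + ‖z‖ ^ 2))) ^ τ) x) +
          (lam / 2) * ((Real.sqrt (A + ‖x‖ ^ 2)) ^ (-γ) *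
            (Real.log (Real.sqrt (A + ‖x‖ ^ 2))) ^ τ) := by
  have hN3 : (3:ℝ) ≤ (N:ℝ) := by exact_mod_cast hN
  refine ⟨2*(2*N*(γ/2+1) + 4*(γ*(γ+2)/4 + γ + 3)) + 1, by nlinarith, ?_⟩
  intro lam hlam x
  show 0 ≤ -(lap (fun z : EuclideanSpace ℝ (Fin N) => gg A γ τ (‖z‖^2)) x)
      + (lam / 2) * gg A γ τ (‖x‖^2)
  have hs : (0:ℝ) ≤ ‖x‖^2 := by positivity
  rw [lap_radial (gg A γ τ) (g1 A γ τ) (g2 A γ τ)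
    (fun s hs => hasDerivAt_gg hA hs) (fun s hs => hasDerivAt_g1 hA hs) x]
  set s := ‖x‖^2 with hsdef
  have hg := gg_pos (γ := γ) (τ := τ) hA hs
  have h1 := (abs_le.mp (g1_bound hA hs hγ1 hτ1 hτ2)).2
  have h2 := (abs_le.mp (sg2_bound hA hs hγ1 hτ1 hτ2)).2
  have e1 : 2*(N:ℝ)*g1 A γ τ s ≤ 2*(N:ℝ)*((γ/2+1) * gg A γ τ s) := by
    have hN0 : (0:ℝ) ≤ 2*(N:ℝ) := by positivity
    exact mul_le_mul_of_nonneg_left h1 hN0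
  have e2 : 4*s*g2 A γ τ s ≤ 4*((γ*(γ+2)/4 + γ + 3) * gg A γ τ s) := by
    calc 4*s*g2 A γ τ s = 4*(s*g2 A γ τ s) := by ring
      _ ≤ 4*((γ*(γ+2)/4 + γ + 3) * gg A γ τ s) := by linarith
  have e3 : (2*(N:ℝ)*(γ/2+1) + 4*(γ*(γ+2)/4 + γ + 3) + 1/2) * gg A γ τ s
      ≤ lam/2 * gg A γ τ s := by
    apply mul_le_mul_of_nonneg_right _ hg.le
    linarith
  nlinarith [e1, e2, e3]
end
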